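/- arXiv:1708.05751 — 2 statements merged into one kernel-verified Lean document; each statement's English description precedes it below -/
import Mathlib

section
/- The quotient of a coding pair is extensional and well-founded: given a coding pair (M₀, R) with distinguished element a, the quotient structure (M̃₀, R̃) obtained by identifying elements whose restricted substructures are isomorphic satisfies: (1) R̃ is well-founded, and (2) distinct elements of M̃₀ that are R̃-below a common element have non-isomorphic restricted substructures, so the membership-like relation R̃ is extensional. -/
variable {α : Type*}

/-- `x` is connected to `a` by an `R`-chain of length `n` (the `R`-distance). -/
def ChainTo (R : α → α → Prop) (a : α) (n : ℕ) (x : α) : Prop :=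
  ∃ f : Fin (n + 1) → α, f 0 = x ∧ f (Fin.last n) = a ∧
    ∀ i : Fin n, R (f i.castSucc) (f i.succ)

/-- The `R`-transitive closure below `x` (including `x` itself): the domain of
the restricted substructure determined by `x`. -/
def below (R : α → α → Prop) (x : α) : Set α := {y | Relation.ReflTransGen R y x}

/-- The restricted substructures below `x` and below `y` are isomorphic
(by an `R`-preserving bijection sending `x` to `y`). -/
def SubIso (R : α → α → Prop) (x y : α) : Prop :=
  ∃ e : below R x ≃ below R y,
    (∀ u v : below R x, R u.1 v.1 ↔ R (e u).1 (e v).1) ∧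
    (e ⟨x, Relation.ReflTransGen.refl⟩).1 = y

/-- A coding pair: a class `M₀` (here: a type `α`) with a distinguished element
`a` and a binary relation `R` such that (i) every element has a unique finite
`R`-distance from `a`; (ii) distinct elements `R`-below a common element have
non-isomorphic restricted substructures; (iii) distinct elements at the same
`R`-distance from `a` have nothing `R`-below both; (iv) `R` is well-founded. -/
structure CodingPair (α : Type*) where
  R : α → α → Prop
  a : α
  dist_unique : ∀ x, ∃! n : ℕ, ChainTo R a n x
  noniso_below : ∀ x y z, y ≠ z → R y x → R z x → ¬ SubIso R y z
  levels_disjoint : ∀ y z, y ≠ z → (∃ n, ChainTo R a n y ∧ ChainTo R a n z) →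
    ∀ v, R v y → ¬ R v z
  wf : WellFounded R

/-- The quotient relation `R̃` on representatives: `x̃ R̃ ỹ` iff some `x₀`
isomorphic-below to `x̃` and `y₀` isomorphic-below to `ỹ` satisfy `x₀ R y₀`. -/
def quotRel (R : α → α → Prop) : α → α → Prop := fun xt yt =>
  ∃ x y, SubIso R x xt ∧ SubIso R y yt ∧ R x y

section SubIsoLemmas

variable {R : α → α → Prop}

theorem subIso_refl (R : α → α → Prop) (x : α) : SubIso R x x :=
  ⟨Equiv.refl _, fun _ _ => Iff.rfl, rfl⟩

theorem pack_symm {x y : α} (e : below R x ≃ below R y)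
    (hR : ∀ p q : below R x, R p.1 q.1 ↔ R (e p).1 (e q).1) :
    ∀ p q : below R y, R p.1 q.1 ↔ R (e.symm p).1 (e.symm q).1 := by
  intro p q
  simpa using (hR (e.symm p) (e.symm q)).symm

theorem subIso_symm {x y : α} (h : SubIso R x y) : SubIso R y x := by
  obtain ⟨e, hR, hx⟩ := h
  refine ⟨e.symm, pack_symm e hR, ?_⟩
  have h2 : e ⟨x, Relation.ReflTransGen.refl⟩ = ⟨y, Relation.ReflTransGen.refl⟩ :=
    Subtype.ext hx
  rw [← h2, Equiv.symm_apply_apply]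

theorem subIso_trans {x y z : α} (h1 : SubIso R x y) (h2 : SubIso R y z) : SubIso R x z := by
  obtain ⟨e1, hR1, hx1⟩ := h1
  obtain ⟨e2, hR2, hx2⟩ := h2
  refine ⟨e1.trans e2, fun u v => (hR1 u v).trans (hR2 _ _), ?_⟩
  have h2 : e1 ⟨x, Relation.ReflTransGen.refl⟩ = ⟨y, Relation.ReflTransGen.refl⟩ :=
    Subtype.ext hx1
  simp only [Equiv.trans_apply, h2]
  exact hx2

theorem rtg_map {x y : α} (e : below R x ≃ below R y)
    (hR : ∀ p q : below R x, R p.1 q.1 ↔ R (e p).1 (e q).1)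
    (u w : below R x) (h : Relation.ReflTransGen R u.1 w.1) :
    Relation.ReflTransGen R (e u).1 (e w).1 := by
  obtain ⟨u, hu⟩ := u
  simp only at h ⊢
  induction h using Relation.ReflTransGen.head_induction_on with
  | refl =>
    have : (⟨w.1, hu⟩ : below R x) = w := Subtype.ext rfl
    rw [this]
  | @head a c h' hrtg ih =>
    have hc : c ∈ below R x := Relation.ReflTransGen.trans hrtg w.2
    exact ((ih hc)).head ((hR ⟨a, hu⟩ ⟨c, hc⟩).mp h')

theorem subIso_mem {x y z : α} (h : SubIso R x y) (hz : Relation.ReflTransGen R z x) :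
    ∃ w, Relation.ReflTransGen R w y ∧ SubIso R z w ∧ (R z x ↔ R w y) := by
  obtain ⟨e, hR, hx⟩ := h
  have hR' := pack_symm e hR
  refine ⟨(e ⟨z, hz⟩).1, (e ⟨z, hz⟩).2, ?_, ?_⟩
  · refine ⟨⟨fun w => ⟨(e ⟨w.1, w.2.trans hz⟩).1, rtg_map e hR ⟨w.1, w.2.trans hz⟩ ⟨z, hz⟩ w.2⟩,
      fun w => ⟨(e.symm ⟨w.1, w.2.trans (e ⟨z, hz⟩).2⟩).1, ?_⟩, ?_, ?_⟩, ?_, rfl⟩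
    · have := rtg_map e.symm hR' ⟨w.1, w.2.trans (e ⟨z, hz⟩).2⟩ (e ⟨z, hz⟩) w.2
      rw [Equiv.symm_apply_apply] at this
      exact this
    · intro w
      apply Subtype.ext
      exact (congrArg Subtype.val (e.symm_apply_apply ⟨w.1, w.2.trans hz⟩) :)
    · intro w
      apply Subtype.ext
      exact (congrArg Subtype.val (e.apply_symm_apply ⟨w.1, w.2.trans (e ⟨z, hz⟩).2⟩) :)
    · intro p q
      exact hR ⟨p.1, p.2.trans hz⟩ ⟨q.1, q.2.trans hz⟩
  · have := hR ⟨z, hz⟩ ⟨x, Relation.ReflTransGen.refl⟩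
    rwa [hx] at this

theorem subIso_child {R : α → α → Prop} {y w x : α} (h : SubIso R y w) (hx : R x y) :
    ∃ w', R w' w ∧ SubIso R x w' := by
  obtain ⟨w', hw', hiso, hiff⟩ := subIso_mem h (Relation.ReflTransGen.single hx)
  exact ⟨w', hiff.mp hx, hiso⟩

end SubIsoLemmas

theorem chainTo_succ {R : α → α → Prop} {a x y : α} {n : ℕ} (hxy : R x y)
    (h : ChainTo R a n y) : ChainTo R a (n + 1) x := by
  obtain ⟨f, h0, hl, hs⟩ := h
  refine ⟨Fin.cases x f, by simp, ?_, ?_⟩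
  · show Fin.cases x f (Fin.last (n + 1)) = a
    rw [← Fin.succ_last, Fin.cases_succ, hl]
  · intro i
    induction i using Fin.cases with
    | zero =>
      show R (Fin.cases x f (Fin.castSucc 0)) (Fin.cases x f (Fin.succ 0))
      rw [Fin.castSucc_zero, Fin.cases_zero, Fin.cases_succ, h0]
      exact hxy
    | succ j =>
      show R (Fin.cases x f (Fin.castSucc j.succ)) (Fin.cases x f (Fin.succ j.succ))
      rw [← Fin.succ_castSucc, Fin.cases_succ, Fin.cases_succ]
      exact hs j

noncomputable def dVal (C : CodingPair α) (x : α) : ℕ := (C.dist_unique x).choose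

theorem dVal_spec (C : CodingPair α) (x : α) : ChainTo C.R C.a (dVal C x) x :=
  (C.dist_unique x).choose_spec.1

theorem dVal_unique (C : CodingPair α) {x : α} {n : ℕ} (h : ChainTo C.R C.a n x) :
    dVal C x = n := ((C.dist_unique x).choose_spec.2 n h).symm

theorem d_step (C : CodingPair α) {x y : α} (h : C.R x y) :
    dVal C x = dVal C y + 1 :=
  dVal_unique C (chainTo_succ h (dVal_spec C y))

theorem rtg_dVal (C : CodingPair α) {w x : α} (h : Relation.ReflTransGen C.R w x) :
    w = x ∨ dVal C x < dVal C w := by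
  induction h using Relation.ReflTransGen.head_induction_on with
  | refl => exact Or.inl rfl
  | @head b c h' hrtg ih =>
    right
    have hd := d_step C h'
    rcases ih with rfl | hlt <;> omega

theorem rtg_antisymm (C : CodingPair α) {w x : α} (h1 : Relation.ReflTransGen C.R w x)
    (h2 : Relation.ReflTransGen C.R x w) : w = x := by
  rcases rtg_dVal C h1 with rfl | a
  · rfl
  rcases rtg_dVal C h2 with rfl | b
  · rfl
  omega

theorem no_R_self (C : CodingPair α) (x : α) : ¬ C.R x x := fun h => by
  have := d_step C h; omega

theorem levels_disj (C : CodingPair α) :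
    ∀ (n : ℕ) (w : α), dVal C w = n → ∀ y z, y ≠ z → dVal C y = dVal C z →
      Relation.ReflTransGen C.R w y → Relation.ReflTransGen C.R w z → False := by
  intro n
  induction n using Nat.strong_induction_on with
  | _ n ih =>
    intro w hw y z hyz hd hwy hwz
    have hwy' : w ≠ y := by
      rintro rfl
      rcases rtg_dVal C hwz with rfl | h
      · exact hyz rfl
      · omega
    have hwz' : w ≠ z := by
      rintro rfl
      rcases rtg_dVal C hwy with rfl | h
      · exact hyz rfl
      · omega
    obtain ⟨r, hwr, hry⟩ := (Relation.ReflTransGen.cases_head hwy).resolve_left hwy'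
    obtain ⟨s, hws, hsz⟩ := (Relation.ReflTransGen.cases_head hwz).resolve_left hwz'
    have hdr : dVal C w = dVal C r + 1 := d_step C hwr
    have hds : dVal C w = dVal C s + 1 := d_step C hws
    by_cases hrs : r = s
    · subst hrs
      exact ih (dVal C r) (by omega) r rfl y z hyz hd hry hsz
    · refine C.levels_disjoint r s hrs ⟨dVal C r, dVal_spec C r, ?_⟩ w hwr hws
      rw [show dVal C r = dVal C s by omega]
      exact dVal_spec C s

theorem child_exists (C : CodingPair α) {w u : α} (hw : Relation.ReflTransGen C.R w u)
    (hne : w ≠ u) : ∃ x, C.R x u ∧ Relation.ReflTransGen C.R w x := by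
  rcases Relation.ReflTransGen.cases_tail hw with h | ⟨c, hc1, hc2⟩
  · exact absurd h.symm hne
  · exact ⟨c, hc2, hc1⟩

theorem child_unique (C : CodingPair α) {w u x x' : α} (h1 : C.R x u) (h2 : C.R x' u)
    (hw : Relation.ReflTransGen C.R w x) (hw' : Relation.ReflTransGen C.R w x') : x = x' := by
  by_contra hne
  exact levels_disj C (dVal C w) w rfl x x' hne
    (by have := d_step C h1; have := d_step C h2; omega) hw hw'

theorem glue (C : CodingPair α) (u v : α)
    (hA : ∀ x, C.R x u → ∃ x', C.R x' v ∧ SubIso C.R x x')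
    (hB : ∀ x', C.R x' v → ∃ x, C.R x u ∧ SubIso C.R x' x) :
    SubIso C.R u v := by
  classical
  choose φ hφv hφiso using hA
  choose ψ hψu hψiso using hB
  choose E hE1 hE2 using hφiso
  have hφiso' : ∀ x (h : C.R x u), SubIso C.R x (φ x h) := fun x h => ⟨E x h, hE1 x h, hE2 x h⟩
  have uniqU : ∀ c c', C.R c u → C.R c' u → SubIso C.R c c' → c = c' := by
    intro c c' hc hc' hiso
    by_contra hne
    exact C.noniso_below u c c' hne hc hc' hiso
  have uniqV : ∀ c c', C.R c v → C.R c' v → SubIso C.R c c' → c = c' := by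
    intro c c' hc hc' hiso
    by_contra hne
    exact C.noniso_below v c c' hne hc hc' hiso
  have hφψ : ∀ c (hc : C.R c v), φ (ψ c hc) (hψu c hc) = c := by
    intro c hc
    exact uniqV _ _ (hφv _ _) hc
      (subIso_trans (subIso_symm (hφiso' _ (hψu c hc))) (subIso_symm (hψiso c hc)))
  have hch_aux : ∀ w, Relation.ReflTransGen C.R w u → w ≠ u →
      ∃ x, C.R x u ∧ Relation.ReflTransGen C.R w x := fun w h1 h2 => child_exists C h1 h2
  choose ch hch1 hch2 using hch_aux
  let F : below C.R u → below C.R v := fun w =>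
    if h : w.1 = u then ⟨v, Relation.ReflTransGen.refl⟩
    else ⟨(E (ch w.1 w.2 h) (hch1 w.1 w.2 h) ⟨w.1, hch2 w.1 w.2 h⟩).1,
      Relation.ReflTransGen.trans (E (ch w.1 w.2 h) (hch1 w.1 w.2 h) ⟨w.1, hch2 w.1 w.2 h⟩).2
        (Relation.ReflTransGen.single (hφv (ch w.1 w.2 h) (hch1 w.1 w.2 h)))⟩
  have Fu : ∀ (w : below C.R u), w.1 = u → (F w).1 = v := by
    intro w h
    simp only [F]
    rw [dif_pos h]
  have Fspec : ∀ (w : below C.R u) (hne : w.1 ≠ u) (x : α) (hx : C.R x u)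
      (hwx : Relation.ReflTransGen C.R w.1 x), (F w).1 = (E x hx ⟨w.1, hwx⟩).1 := by
    intro w hne x hx hwx
    obtain rfl : x = ch w.1 w.2 hne :=
      child_unique C hx (hch1 w.1 w.2 hne) hwx (hch2 w.1 w.2 hne)
    simp only [F]
    rw [dif_neg hne]
  have Fne : ∀ (w : below C.R u), w.1 ≠ u → (F w).1 ≠ v := by
    intro w hne he
    obtain ⟨x, hx, hwx⟩ := child_exists C w.2 hne
    have hm : Relation.ReflTransGen C.R (F w).1 (φ x hx) := by
      rw [Fspec w hne x hx hwx]; exact (E x hx ⟨w.1, hwx⟩).2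
    rw [he] at hm
    have hvx : v = φ x hx := rtg_antisymm C hm (Relation.ReflTransGen.single (hφv x hx))
    have h2 := hφv x hx
    rw [← hvx] at h2
    exact no_R_self C v h2
  have Finj : Function.Injective F := by
    intro w w' he
    have hev : (F w).1 = (F w').1 := congrArg Subtype.val he
    by_cases h : w.1 = u <;> by_cases h' : w'.1 = u
    · exact Subtype.ext (h.trans h'.symm)
    · exact absurd (hev ▸ Fu w h) (Fne w' h')
    · exact absurd (hev.symm ▸ Fu w' h') (Fne w h)
    · obtain ⟨x, hx, hwx⟩ := child_exists C w.2 h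
      obtain ⟨x', hx', hwx'⟩ := child_exists C w'.2 h'
      rw [Fspec w h x hx hwx, Fspec w' h' x' hx' hwx'] at hev
      have hφeq : φ x hx = φ x' hx' := by
        by_contra hne
        refine levels_disj C (dVal C (E x hx ⟨w.1, hwx⟩).1) _ rfl (φ x hx) (φ x' hx') hne
          (by have := d_step C (hφv x hx); have := d_step C (hφv x' hx'); omega)
          (E x hx ⟨w.1, hwx⟩).2 ?_
        rw [hev]
        exact (E x' hx' ⟨w'.1, hwx'⟩).2
      obtain rfl : x = x' := by
        refine uniqU x x' hx hx' (subIso_trans (hφiso' x hx) ?_)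
        rw [hφeq]
        exact subIso_symm (hφiso' x' hx')
      have heq := (E x hx).injective (Subtype.ext hev)
      have h3 : w.1 = w'.1 := Subtype.mk_eq_mk.mp heq
      exact Subtype.ext h3
  have Fsurj : Function.Surjective F := by
    intro t
    by_cases ht : t.1 = v
    · exact ⟨⟨u, Relation.ReflTransGen.refl⟩, Subtype.ext ((Fu _ rfl).trans ht.symm)⟩
    · obtain ⟨c, hc, htc⟩ := child_exists C t.2 ht
      obtain ⟨x, hx, hmem⟩ : ∃ x, ∃ hx : C.R x u, Relation.ReflTransGen C.R t.1 (φ x hx) :=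
        ⟨ψ c hc, hψu c hc, by rw [hφψ c hc]; exact htc⟩
      obtain ⟨s, hs⟩ : ∃ s, s = (E x hx).symm ⟨t.1, hmem⟩ := ⟨_, rfl⟩
      have hsu : s.1 ≠ u := by
        intro hsu
        have hux : u = x := rtg_antisymm C (hsu ▸ s.2) (Relation.ReflTransGen.single hx)
        rw [← hux] at hx
        exact no_R_self C u hx
      refine ⟨⟨s.1, s.2.trans (Relation.ReflTransGen.single hx)⟩, Subtype.ext ?_⟩
      rw [Fspec ⟨s.1, s.2.trans (Relation.ReflTransGen.single hx)⟩ hsu x hx s.2, hs]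
      show (E x hx ((E x hx).symm ⟨t.1, hmem⟩)).1 = t.1
      rw [Equiv.apply_symm_apply]
  refine ⟨Equiv.ofBijective F ⟨Finj, Fsurj⟩, ?_, ?_⟩
  · intro p q
    show C.R p.1 q.1 ↔ C.R (F p).1 (F q).1
    by_cases h : p.1 = u <;> by_cases h' : q.1 = u
    · rw [h, h', Fu p h, Fu q h']
      exact iff_of_false (no_R_self C u) (no_R_self C v)
    · rw [h, Fu p h]
      refine iff_of_false (fun hR => ?_) (fun hR => ?_)
      · exact h' (rtg_antisymm C q.2 (Relation.ReflTransGen.single hR))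
      · exact Fne q h' (rtg_antisymm C (F q).2 (Relation.ReflTransGen.single hR))
    · rw [h', Fu q h']
      constructor
      · intro hR
        rw [Fspec p h p.1 hR Relation.ReflTransGen.refl, hE2 p.1 hR]
        exact hφv p.1 hR
      · intro hR
        obtain ⟨x, hx, hpx⟩ := child_exists C p.2 h
        have hm : Relation.ReflTransGen C.R (F p).1 (φ x hx) := by
          rw [Fspec p h x hx hpx]; exact (E x hx ⟨p.1, hpx⟩).2
        have he : (F p).1 = φ x hx := by
          rcases rtg_dVal C hm with he | hlt
          · exact he
          · exfalso
            have d1 := d_step C hR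
            have d2 := d_step C (hφv x hx)
            omega
        rw [Fspec p h x hx hpx] at he
        have heq : (⟨p.1, hpx⟩ : below C.R x) = ⟨x, Relation.ReflTransGen.refl⟩ :=
          (E x hx).injective (Subtype.ext (he.trans (hE2 x hx).symm))
        have hpx1 : p.1 = x := congrArg Subtype.val heq
        rw [hpx1]
        exact hx
    · constructor
      · intro hR
        obtain ⟨x', hx', hqx'⟩ := child_exists C q.2 h'
        have hpx' : Relation.ReflTransGen C.R p.1 x' :=
          (Relation.ReflTransGen.single hR).trans hqx'
        rw [Fspec p h x' hx' hpx', Fspec q h' x' hx' hqx']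
        exact (hE1 x' hx' ⟨p.1, hpx'⟩ ⟨q.1, hqx'⟩).mp hR
      · intro hR
        obtain ⟨x, hx, hpx⟩ := child_exists C p.2 h
        obtain ⟨x', hx', hqx'⟩ := child_exists C q.2 h'
        rw [Fspec p h x hx hpx, Fspec q h' x' hx' hqx'] at hR
        have hφeq : φ x hx = φ x' hx' := by
          by_contra hne
          refine levels_disj C (dVal C (E x hx ⟨p.1, hpx⟩).1) _ rfl (φ x hx) (φ x' hx') hne
            (by have := d_step C (hφv x hx); have := d_step C (hφv x' hx'); omega)
            (E x hx ⟨p.1, hpx⟩).2 ?_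
          exact (Relation.ReflTransGen.single hR).trans (E x' hx' ⟨q.1, hqx'⟩).2
        obtain rfl : x = x' := by
          refine uniqU x x' hx hx' (subIso_trans (hφiso' x hx) ?_)
          rw [hφeq]
          exact subIso_symm (hφiso' x' hx')
        exact (hE1 x hx ⟨p.1, hpx⟩ ⟨q.1, hqx'⟩).mpr hR
  · exact Fu ⟨u, Relation.ReflTransGen.refl⟩ rfl

/-- The quotient of a coding pair is extensional and
well-founded: given a coding pair `(M₀, R)` and a choice `rep` of fixed
representatives of the isomorphism classes, the quotient structure
`(M̃₀, R̃) = (range rep, quotRel R)` satisfies: (1) `R̃` is well-founded;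
(2) distinct elements of `M̃₀` that are `R̃`-below a common element have
non-isomorphic restricted substructures; and hence (3) `R̃` is extensional. -/
theorem quotient_codingPair_extensional_wf (C : CodingPair α) (rep : α → α)
    (hrep_iso : ∀ x, SubIso C.R x (rep x))
    (hrep_eq : ∀ x y, SubIso C.R x y → rep x = rep y) :
    WellFounded (fun u v : Set.range rep => quotRel C.R u.1 v.1) ∧
    (∀ u v w : Set.range rep, u ≠ v →
      quotRel C.R u.1 w.1 → quotRel C.R v.1 w.1 → ¬ SubIso C.R u.1 v.1) ∧
    (∀ u v : Set.range rep,
      (∀ z : Set.range rep, quotRel C.R z.1 u.1 ↔ quotRel C.R z.1 v.1) → u = v) := by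
  classical
  have hfix : ∀ t : Set.range rep, rep t.1 = t.1 := by
    rintro ⟨t, x, rfl⟩
    exact (hrep_eq x (rep x) (hrep_iso x)).symm
  have hEq : ∀ u v : Set.range rep, SubIso C.R u.1 v.1 → u = v := by
    intro u v h
    apply Subtype.ext
    rw [← hfix u, ← hfix v]
    exact hrep_eq _ _ h
  refine ⟨?_, ?_, ?_⟩
  · have key : ∀ w : α, ∀ v : Set.range rep, SubIso C.R w v.1 →
        Acc (fun u v : Set.range rep => quotRel C.R u.1 v.1) v := by
      intro w
      induction (C.wf.apply w) with
      | intro w hacc ih =>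
        intro v hsub
        constructor
        intro z hz
        obtain ⟨x, y, hxz, hyv, hxy⟩ := hz
        have h1 : SubIso C.R y w := subIso_trans hyv (subIso_symm hsub)
        obtain ⟨w', hw', hxw'⟩ := subIso_child h1 hxy
        exact ih w' hw' z (subIso_trans (subIso_symm hxw') hxz)
    exact ⟨fun v => key v.1 v (subIso_refl C.R v.1)⟩
  · intro u v w hne _ _ hsub
    exact hne (hEq u v hsub)
  · intro u v huv
    refine hEq u v (glue C u.1 v.1 ?_ ?_)
    · intro x hx
      have hq : quotRel C.R (rep x) u.1 := ⟨x, u.1, hrep_iso x, subIso_refl C.R u.1, hx⟩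
      obtain ⟨x₀, y₀, h1, h2, h3⟩ := (huv ⟨rep x, ⟨x, rfl⟩⟩).mp hq
      obtain ⟨x', hx'v, hx₀x'⟩ := subIso_child h2 h3
      exact ⟨x', hx'v, subIso_trans (subIso_trans (hrep_iso x) (subIso_symm h1)) hx₀x'⟩
    · intro x hx
      have hq : quotRel C.R (rep x) v.1 := ⟨x, v.1, hrep_iso x, subIso_refl C.R v.1, hx⟩
      obtain ⟨x₀, y₀, h1, h2, h3⟩ := (huv ⟨rep x, ⟨x, rfl⟩⟩).mpr hq
      obtain ⟨x', hx'u, hx₀x'⟩ := subIso_child h2 h3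
      exact ⟨x', hx'u, subIso_trans (subIso_trans (hrep_iso x) (subIso_symm h1)) hx₀x'⟩
end

section
/- If M is a countable transitive model of ZFC, then a theory T in the M-logic language (with constants for each element of M and a predicate for M) is consistent in M-logic if and only if T has a model which is an outer model of M, i.e., a (possibly countable) structure containing M with the constants interpreted standardly and M interpreted as M. (Barwise completeness for M-logic over a countable admissible set.) -/
/-- First-order formulas of the language of set theory (one binary relation `∈`),
with free/bound variables among `Fin n`; `ex` quantifies the last variable,
`bex i` is the bounded quantifier `∃ x ∈ v i`. -/
inductive SForm : ℕ → Type
  | mem {n} (i j : Fin n) : SForm n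
  | eq {n} (i j : Fin n) : SForm n
  | not {n} : SForm n → SForm n
  | and {n} : SForm n → SForm n → SForm n
  | ex {n} : SForm (n + 1) → SForm n
  | bex {n} (i : Fin n) : SForm (n + 1) → SForm n

/-- Tarskian satisfaction for `SForm` over a domain `D` of ZF-sets, with the
real membership relation. -/
def SForm.Realize (D : Set ZFSet) : ∀ {n}, SForm n → (Fin n → ZFSet) → Prop
  | _, .mem i j, v => v i ∈ v j
  | _, .eq i j, v => v i = v j
  | _, .not φ, v => ¬ SForm.Realize D φ v
  | _, .and φ ψ, v => SForm.Realize D φ v ∧ SForm.Realize D ψ v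
  | _, .ex φ, v => ∃ x ∈ D, SForm.Realize D φ (Fin.snoc v x)
  | _, .bex i φ, v => ∃ x ∈ v i, SForm.Realize D φ (Fin.snoc v x)

/-- `A ⊨ φ` for a sentence `φ`. -/
def ZModels (A : ZFSet) (φ : SForm 0) : Prop :=
  φ.Realize A.toSet (fun i => i.elim0)
/-- `M` is a transitive model of ZFC (axioms stated semantically, with the
separation and replacement schemes ranging over all first-order formulas). -/
structure IsZFCModel (M : ZFSet) : Prop where
  transitive : M.IsTransitive
  empty_mem : ∅ ∈ M
  infinity : ZFSet.omega ∈ M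
  pairing : ∀ x ∈ M, ∀ y ∈ M, ({x, y} : ZFSet) ∈ M
  union : ∀ x ∈ M, ZFSet.sUnion x ∈ M
  power : ∀ x ∈ M, ∃ p ∈ M, ∀ z ∈ M, z ⊆ x → z ∈ p
  separation : ∀ {n} (φ : SForm (n + 1)) (p : Fin n → ZFSet), (∀ i, p i ∈ M) →
    ∀ a ∈ M, ∃ b ∈ M, ∀ z, z ∈ b ↔ z ∈ a ∧ φ.Realize M.toSet (Fin.snoc p z)
  replacement : ∀ {n} (φ : SForm (n + 2)) (p : Fin n → ZFSet), (∀ i, p i ∈ M) →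
    ∀ a ∈ M, (∀ x ∈ a, ∃! y, y ∈ M ∧ φ.Realize M.toSet (Fin.snoc (Fin.snoc p x) y)) →
    ∃ b ∈ M, ∀ y, y ∈ b ↔ ∃ x ∈ a, φ.Realize M.toSet (Fin.snoc (Fin.snoc p x) y)
  choice : ∀ x ∈ M, (∀ y ∈ x, y ≠ ∅) →
    ∃ c ∈ M, ∀ y ∈ x, ∃! z, z ∈ y ∧ ZFSet.pair y z ∈ c

/-- `N` is an inner model of `M`: a transitive ZFC submodel of `M` containing
all the ordinals of `M`. -/
def IsInnerModel (N M : ZFSet) : Prop :=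
  N ⊆ M ∧ IsZFCModel N ∧ ∀ x ∈ M, x.IsOrdinal → x ∈ N

/-- For a transitive model of ZFC, satisfying `V = L` is equivalent to having
no proper inner model (since `L` is the least inner model); we use this
characterisation of `M ⊨ V = L`. -/
def SatisfiesVeqL (M : ZFSet) : Prop :=
  ∀ N, IsInnerModel N M → N = M
/-- Terms of the language of `M`-logic: variables and constants `x̄` for
each `x ∈ M`. -/
inductive MTerm (M : ZFSet) (n : ℕ) : Type 1
  | var (i : Fin n) : MTerm M n
  | const (x : M.toSet) : MTerm M n

/-- Formulas of `M`-logic: `∈`, `=`, the predicate `M̄` (denoting `M`),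
negation, conjunction, and universal quantification (binding the last
variable). -/
inductive MForm (M : ZFSet) : ℕ → Type 1
  | mem {n} (s t : MTerm M n) : MForm M n
  | eq {n} (s t : MTerm M n) : MForm M n
  | inM {n} (t : MTerm M n) : MForm M n
  | not {n} : MForm M n → MForm M n
  | and {n} : MForm M n → MForm M n → MForm M n
  | all {n} : MForm M (n + 1) → MForm M n

/-- Delete index `i ≠ k` from `Fin (n+1)`. -/
def finDrop {n : ℕ} (k i : Fin (n + 1)) (h : i ≠ k) : Fin n :=
  if hlt : i.val < k.val then ⟨i.val, by have hk := k.isLt; omega⟩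
  else ⟨i.val - 1, by
    have h' : i.val ≠ k.val := fun hh => h (Fin.ext hh)
    have hi := i.isLt; omega⟩

/-- Substitute the constant `c` for the variable `k` in a term. -/
def MTerm.substAt {M : ZFSet} {n : ℕ} (k : Fin (n + 1)) (c : M.toSet) :
    MTerm M (n + 1) → MTerm M n
  | .var i => if h : i = k then .const c else .var (finDrop k i h)
  | .const x => .const x

/-- Substitute the constant `c` for the variable `k` in a formula. -/
def MForm.substAt {M : ZFSet} : ∀ {n}, Fin (n + 1) → M.toSet → MForm M (n + 1) → MForm M n
  | _, k, c, .mem s t => .mem (s.substAt k c) (t.substAt k c)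
  | _, k, c, .eq s t => .eq (s.substAt k c) (t.substAt k c)
  | _, k, c, .inM t => .inM (t.substAt k c)
  | _, k, c, .not φ => .not (φ.substAt k c)
  | _, k, c, .and φ ψ => .and (φ.substAt k c) (ψ.substAt k c)
  | _, k, c, .all φ => .all (φ.substAt k.castSucc c)

/-- Material implication. -/
def impF {M : ZFSet} {n : ℕ} (φ ψ : MForm M n) : MForm M n := .not (.and φ (.not ψ))

/-- `∀ x ∈ ā, φ(x)`. -/
def bAllC {M : ZFSet} (a : M.toSet) (φ : MForm M 1) : MForm M 0 :=
  .all (impF (.mem (.var 0) (.const a)) φ)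

/-- `∀ x ∈ M̄, φ(x)`. -/
def vAllC {M : ZFSet} (φ : MForm M 1) : MForm M 0 :=
  .all (impF (.inM (.var 0)) φ)

/-- A structure for the language of `M`-logic. -/
structure MStruct (M : ZFSet) where
  Dom : Type 1
  mem : Dom → Dom → Prop
  inM : Dom → Prop
  const : M.toSet → Dom

/-- Evaluation of terms. -/
def MTerm.val {M : ZFSet} (S : MStruct M) {n : ℕ} (v : Fin n → S.Dom) :
    MTerm M n → S.Dom
  | .var i => v i
  | .const x => S.const x

/-- Tarskian satisfaction for `M`-logic formulas. -/
def MForm.Realize {M : ZFSet} (S : MStruct M) : ∀ {n}, MForm M n → (Fin n → S.Dom) → Prop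
  | _, .mem s t, v => S.mem (s.val S v) (t.val S v)
  | _, .eq s t, v => s.val S v = t.val S v
  | _, .inM t, v => S.inM (t.val S v)
  | _, .not φ, v => ¬ MForm.Realize S φ v
  | _, .and φ ψ, v => MForm.Realize S φ v ∧ MForm.Realize S ψ v
  | _, .all φ, v => ∀ d : S.Dom, MForm.Realize S φ (Fin.snoc v d)

/-- Logically valid sentences (the axioms of first-order logic). -/
def MValid (M : ZFSet) (φ : MForm M 0) : Prop :=
  ∀ S : MStruct M, φ.Realize S (fun i => i.elim0)

/-- Atomic or negated atomic sentences (in the language with constants) that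
are true in `V`. -/
def IsTrueAtom (M : ZFSet) (φ : MForm M 0) : Prop :=
  (∃ x y : M.toSet, x.1 ∈ y.1 ∧ φ = .mem (.const x) (.const y)) ∨
  (∃ x y : M.toSet, x.1 ∉ y.1 ∧ φ = .not (.mem (.const x) (.const y))) ∨
  (∃ x y : M.toSet, x = y ∧ φ = .eq (.const x) (.const y)) ∨
  (∃ x y : M.toSet, x ≠ y ∧ φ = .not (.eq (.const x) (.const y)))

/-- The provability relation of `M`-logic from a theory `T`: axioms are the
sentences `x̄ ∈ M̄`, the true atomic and negated atomic facts about `M`, and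
the axioms of first-order logic; rules are modus ponens, the Set-rule and
the `M`-rule (proofs are well-founded, possibly infinitely branching trees). -/
inductive MProv (M : ZFSet) (T : Set (MForm M 0)) : MForm M 0 → Prop
  | hyp {φ} : φ ∈ T → MProv M T φ
  | constInM (x : M.toSet) : MProv M T (.inM (.const x))
  | atom {φ} : IsTrueAtom M φ → MProv M T φ
  | logic {φ} : MValid M φ → MProv M T φ
  | mp {φ ψ} : MProv M T φ → MProv M T (impF φ ψ) → MProv M T ψ
  | setRule {a : ZFSet} (ha : a ∈ M) {φ : MForm M 1}
      (h : ∀ b : M.toSet, b.1 ∈ a → MProv M T (φ.substAt 0 b)) :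
      MProv M T (bAllC ⟨a, ha⟩ φ)
  | vRule {φ : MForm M 1} (h : ∀ b : M.toSet, MProv M T (φ.substAt 0 b)) :
      MProv M T (vAllC φ)

/-- `T` is consistent in `M`-logic. -/
def ConsistentML (M : ZFSet) (T : Set (MForm M 0)) : Prop :=
  ¬ ∃ φ : MForm M 0, MProv M T (.and φ (.not φ))

/-- `S` is an outer-model-style structure over `M`: constants are interpreted
standardly (injectively, respecting `∈`), `M̄` is interpreted as (the image of)
`M`, and `M` is a standard transitive part of `S`. -/
def StandardOverM (M : ZFSet) (S : MStruct M) : Prop :=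
  Function.Injective S.const ∧
  (∀ x y : M.toSet, S.mem (S.const x) (S.const y) ↔ x.1 ∈ y.1) ∧
  (∀ d, S.inM d ↔ ∃ x : M.toSet, d = S.const x) ∧
  (∀ d (y : M.toSet), S.mem d (S.const y) → ∃ x : M.toSet, d = S.const x)


/-! ### Auxiliary development for the proof -/

namespace MLogicAux

variable {M : ZFSet}

/-- Renaming of terms along a map of variable indices. -/
def rent {m r : ℕ} (f : Fin m → Fin r) : MTerm M m → MTerm M r
  | .var i => .var (f i)
  | .const x => .const x

/-- Extend a renaming under a binder (the binder is the *last* variable). -/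
def fext {m r : ℕ} (f : Fin m → Fin r) : Fin (m + 1) → Fin (r + 1) :=
  Fin.snoc (fun i => (f i).castSucc) (Fin.last r)

/-- Renaming of formulas. -/
def renf : ∀ {m r : ℕ}, (Fin m → Fin r) → MForm M m → MForm M r
  | _, _, f, .mem s t => .mem (rent f s) (rent f t)
  | _, _, f, .eq s t => .eq (rent f s) (rent f t)
  | _, _, f, .inM t => .inM (rent f t)
  | _, _, f, .not φ => .not (renf f φ)
  | _, _, f, .and φ ψ => .and (renf f φ) (renf f ψ)
  | _, _, f, .all φ => .all (renf (fext f) φ)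

/-- Substitution on terms. -/
def subt {m r : ℕ} (σ : Fin m → MTerm M r) : MTerm M m → MTerm M r
  | .var i => σ i
  | .const x => .const x

/-- Extend a substitution under a binder. -/
def sext {m r : ℕ} (σ : Fin m → MTerm M r) : Fin (m + 1) → MTerm M (r + 1) :=
  Fin.snoc (fun i => rent Fin.castSucc (σ i)) (.var (Fin.last r))

/-- Substitution on formulas. -/
def subf : ∀ {m r : ℕ}, (Fin m → MTerm M r) → MForm M m → MForm M r
  | _, _, σ, .mem s t => .mem (subt σ s) (subt σ t)
  | _, _, σ, .eq s t => .eq (subt σ s) (subt σ t)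
  | _, _, σ, .inM t => .inM (subt σ t)
  | _, _, σ, .not φ => .not (subf σ φ)
  | _, _, σ, .and φ ψ => .and (subf σ φ) (subf σ ψ)
  | _, _, σ, .all φ => .all (subf (sext σ) φ)

/-- Existential quantification of the last variable. -/
def exF {n : ℕ} (φ : MForm M (n + 1)) : MForm M n := .not (.all (.not φ))

/-- Existential closure. -/
def exN : ∀ {n : ℕ}, MForm M n → MForm M 0
  | 0, φ => φ
  | _ + 1, φ => exN (exF φ)

/-- Existential closure down to one free variable (variable `0` stays free). -/
def exNi : ∀ {n : ℕ}, MForm M (n + 1) → MForm M 1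
  | 0, θ => θ
  | _ + 1, θ => exNi (exF θ)

@[simp] lemma val_rent {m r : ℕ} (f : Fin m → Fin r) (t : MTerm M m)
    (S : MStruct M) (v : Fin r → S.Dom) :
    (rent f t).val S v = t.val S (v ∘ f) := by
  cases t <;> rfl

lemma snoc_comp_fext {m r : ℕ} (f : Fin m → Fin r) {α : Type*} (v : Fin r → α) (d : α) :
    (Fin.snoc v d : Fin (r + 1) → α) ∘ fext f = Fin.snoc (v ∘ f) d := by
  funext j
  refine Fin.lastCases ?_ (fun i => ?_) j <;>
    simp [fext, Function.comp, Fin.snoc_castSucc, Fin.snoc_last]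

lemma realize_renf : ∀ {m : ℕ} (φ : MForm M m) {r : ℕ} (f : Fin m → Fin r)
    (S : MStruct M) (v : Fin r → S.Dom),
    (renf f φ).Realize S v ↔ φ.Realize S (v ∘ f)
  | _, .mem s t, _, f, S, v => by simp [renf, MForm.Realize]
  | _, .eq s t, _, f, S, v => by simp [renf, MForm.Realize]
  | _, .inM t, _, f, S, v => by simp [renf, MForm.Realize]
  | _, .not φ, _, f, S, v => by simp [renf, MForm.Realize, realize_renf φ]
  | _, .and φ ψ, _, f, S, v => by
      simp [renf, MForm.Realize, realize_renf φ, realize_renf ψ]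
  | _, .all φ, _, f, S, v => by
      simp only [renf, MForm.Realize]
      refine forall_congr' fun d => ?_
      rw [realize_renf φ, snoc_comp_fext]

lemma val_subt {m r : ℕ} (σ : Fin m → MTerm M r) (t : MTerm M m)
    (S : MStruct M) (v : Fin r → S.Dom) :
    (subt σ t).val S v = t.val S (fun i => (σ i).val S v) := by
  cases t <;> rfl

lemma sext_val {m r : ℕ} (σ : Fin m → MTerm M r) (S : MStruct M)
    (v : Fin r → S.Dom) (d : S.Dom) :
    (fun i => (sext σ i).val S (Fin.snoc v d)) =
      Fin.snoc (fun i => (σ i).val S v) d := by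
  funext j
  refine Fin.lastCases ?_ (fun i => ?_) j
  · simp [sext, MTerm.val, Fin.snoc_last]
  · simp only [sext, Fin.snoc_castSucc, val_rent]
    congr 1
    funext i'
    simp [Function.comp, Fin.snoc_castSucc]

lemma realize_subf : ∀ {m : ℕ} (φ : MForm M m) {r : ℕ} (σ : Fin m → MTerm M r)
    (S : MStruct M) (v : Fin r → S.Dom),
    (subf σ φ).Realize S v ↔ φ.Realize S (fun i => (σ i).val S v)
  | _, .mem s t, _, σ, S, v => by simp [subf, MForm.Realize, val_subt]
  | _, .eq s t, _, σ, S, v => by simp [subf, MForm.Realize, val_subt]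
  | _, .inM t, _, σ, S, v => by simp [subf, MForm.Realize, val_subt]
  | _, .not φ, _, σ, S, v => by simp [subf, MForm.Realize, realize_subf φ]
  | _, .and φ ψ, _, σ, S, v => by
      simp [subf, MForm.Realize, realize_subf φ, realize_subf ψ]
  | _, .all φ, _, σ, S, v => by
      simp only [subf, MForm.Realize]
      refine forall_congr' fun d => ?_
      rw [realize_subf φ, sext_val]

end MLogicAux
namespace MLogicAux

variable {M : ZFSet}

lemma rent_congr {m r : ℕ} {f g : Fin m → Fin r} (h : ∀ i, f i = g i) (t : MTerm M m) :
    rent f t = rent g t := by cases t <;> simp [rent, h]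

lemma fext_congr {m r : ℕ} {f g : Fin m → Fin r} (h : ∀ i, f i = g i) :
    ∀ j, fext f j = fext g j := by
  intro j
  refine Fin.lastCases ?_ (fun i => ?_) j <;> simp [fext, h]

lemma renf_congr : ∀ {m r : ℕ} {f g : Fin m → Fin r}, (∀ i, f i = g i) →
    ∀ (φ : MForm M m), renf f φ = renf g φ
  | _, _, _, _, h, .mem s t => by simp [renf, rent_congr h]
  | _, _, _, _, h, .eq s t => by simp [renf, rent_congr h]
  | _, _, _, _, h, .inM t => by simp [renf, rent_congr h]
  | _, _, _, _, h, .not φ => by simp [renf, renf_congr h φ]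
  | _, _, _, _, h, .and φ ψ => by simp [renf, renf_congr h φ, renf_congr h ψ]
  | _, _, _, _, h, .all φ => by simp [renf, renf_congr (fext_congr h) φ]

lemma rent_id {m : ℕ} {f : Fin m → Fin m} (h : ∀ i, f i = i) (t : MTerm M m) :
    rent f t = t := by cases t <;> simp [rent, h]

lemma fext_id {m : ℕ} {f : Fin m → Fin m} (h : ∀ i, f i = i) :
    ∀ j, fext f j = j := by
  intro j
  refine Fin.lastCases ?_ (fun i => ?_) j <;> simp [fext, h]

lemma renf_id : ∀ {m : ℕ} {f : Fin m → Fin m}, (∀ i, f i = i) →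
    ∀ (φ : MForm M m), renf f φ = φ
  | _, _, h, .mem s t => by simp [renf, rent_id h]
  | _, _, h, .eq s t => by simp [renf, rent_id h]
  | _, _, h, .inM t => by simp [renf, rent_id h]
  | _, _, h, .not φ => by simp [renf, renf_id h φ]
  | _, _, h, .and φ ψ => by simp [renf, renf_id h φ, renf_id h ψ]
  | _, _, h, .all φ => by simp [renf, renf_id (fext_id h) φ]

lemma rent_rent {m r s : ℕ} (f : Fin r → Fin s) (g : Fin m → Fin r) (t : MTerm M m) :
    rent f (rent g t) = rent (fun i => f (g i)) t := by cases t <;> rfl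

lemma subt_congr {m r : ℕ} {σ τ : Fin m → MTerm M r} (h : ∀ i, σ i = τ i)
    (t : MTerm M m) : subt σ t = subt τ t := by cases t <;> simp [subt, h]

lemma sext_congr {m r : ℕ} {σ τ : Fin m → MTerm M r} (h : ∀ i, σ i = τ i) :
    ∀ j, sext σ j = sext τ j := by
  intro j
  refine Fin.lastCases ?_ (fun i => ?_) j <;> simp [sext, h]

lemma subf_congr : ∀ {m r : ℕ} {σ τ : Fin m → MTerm M r}, (∀ i, σ i = τ i) →
    ∀ (φ : MForm M m), subf σ φ = subf τ φ
  | _, _, _, _, h, .mem s t => by simp [subf, subt_congr h]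
  | _, _, _, _, h, .eq s t => by simp [subf, subt_congr h]
  | _, _, _, _, h, .inM t => by simp [subf, subt_congr h]
  | _, _, _, _, h, .not φ => by simp [subf, subf_congr h φ]
  | _, _, _, _, h, .and φ ψ => by simp [subf, subf_congr h φ, subf_congr h ψ]
  | _, _, _, _, h, .all φ => by simp [subf, subf_congr (sext_congr h) φ]

lemma rent_subt {m r s : ℕ} (f : Fin r → Fin s) (σ : Fin m → MTerm M r)
    (t : MTerm M m) : rent f (subt σ t) = subt (fun i => rent f (σ i)) t := by
  cases t <;> rfl

lemma rent_fext_sext {m r s : ℕ} (f : Fin r → Fin s) (σ : Fin m → MTerm M r) :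
    ∀ j, rent (fext f) (sext σ j) = sext (fun i => rent f (σ i)) j := by
  intro j
  refine Fin.lastCases ?_ (fun i => ?_) j
  · simp [sext, rent, fext]
  · simp only [sext, Fin.snoc_castSucc, rent_rent]
    refine rent_congr (fun i' => ?_) _
    simp [fext]

lemma renf_subf : ∀ {m r s : ℕ} (f : Fin r → Fin s) (σ : Fin m → MTerm M r)
    (φ : MForm M m), renf f (subf σ φ) = subf (fun i => rent f (σ i)) φ
  | _, _, _, f, σ, .mem s t => by simp [renf, subf, rent_subt]
  | _, _, _, f, σ, .eq s t => by simp [renf, subf, rent_subt]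
  | _, _, _, f, σ, .inM t => by simp [renf, subf, rent_subt]
  | _, _, _, f, σ, .not φ => by simp [renf, subf, renf_subf f σ φ]
  | _, _, _, f, σ, .and φ ψ => by simp [renf, subf, renf_subf f σ φ, renf_subf f σ ψ]
  | _, _, _, f, σ, .all φ => by
      simp only [renf, subf, renf_subf (fext f) (sext σ) φ]
      exact congrArg MForm.all (subf_congr (rent_fext_sext f σ) φ)

/-! ### `substAt` and `finDrop` -/

/-- Update a valuation at position `k`, using `finDrop` elsewhere. -/
def upd {n : ℕ} {α : Sort*} (k : Fin (n + 1)) (x : α) (v : Fin n → α) :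
    Fin (n + 1) → α :=
  fun i => if h : i = k then x else v (finDrop k i h)

lemma finDrop_castSucc {n : ℕ} (k i : Fin (n + 1)) (h : i ≠ k)
    (h' : i.castSucc ≠ k.castSucc) :
    finDrop k.castSucc i.castSucc h' = (finDrop k i h).castSucc := by
  apply Fin.ext
  simp only [finDrop, Fin.coe_castSucc]
  split <;> rfl

lemma finDrop_last {n : ℕ} (k : Fin (n + 1))
    (h : (Fin.last (n + 1)) ≠ k.castSucc) :
    finDrop k.castSucc (Fin.last (n + 1)) h = Fin.last n := by
  apply Fin.ext
  have hk := k.isLt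
  simp only [finDrop, Fin.coe_castSucc, Fin.val_last]
  rw [dif_neg (by omega)]
  simp

lemma last_ne_castSucc {n : ℕ} (k : Fin (n + 1)) : (Fin.last (n + 1)) ≠ k.castSucc := by
  simp only [ne_eq, Fin.ext_iff, Fin.val_last, Fin.coe_castSucc]
  have := k.isLt; omega

lemma upd_snoc {n : ℕ} {α : Sort*} (k : Fin (n + 1)) (x : α) (v : Fin n → α) (d : α) :
    upd k.castSucc x (Fin.snoc v d) = Fin.snoc (upd k x v) d := by
  funext j
  refine Fin.lastCases ?_ (fun i => ?_) j
  · rw [Fin.snoc_last]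
    rw [upd, dif_neg (last_ne_castSucc k), finDrop_last k, Fin.snoc_last]
  · rw [Fin.snoc_castSucc]
    by_cases hik : i = k
    · subst hik
      simp [upd]
    · have h' : i.castSucc ≠ k.castSucc := fun hh => hik (Fin.castSucc_injective _ hh)
      rw [upd, dif_neg h', finDrop_castSucc k i hik h', Fin.snoc_castSucc,
        upd, dif_neg hik]

lemma val_substAt {n : ℕ} (k : Fin (n + 1)) (c : M.toSet) (t : MTerm M (n + 1))
    (S : MStruct M) (v : Fin n → S.Dom) :
    (t.substAt k c).val S v = t.val S (upd k (S.const c) v) := by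
  cases t with
  | var i =>
      by_cases h : i = k <;> simp [MTerm.substAt, upd, h, MTerm.val]
  | const x => rfl

lemma realize_substAt : ∀ {n : ℕ} (φ : MForm M (n + 1)) (k : Fin (n + 1)) (c : M.toSet)
    (S : MStruct M) (v : Fin n → S.Dom),
    (φ.substAt k c).Realize S v ↔ φ.Realize S (upd k (S.const c) v)
  | _, .mem s t, k, c, S, v => by simp [MForm.substAt, MForm.Realize, val_substAt]
  | _, .eq s t, k, c, S, v => by simp [MForm.substAt, MForm.Realize, val_substAt]
  | _, .inM t, k, c, S, v => by simp [MForm.substAt, MForm.Realize, val_substAt]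
  | _, .not φ, k, c, S, v => by simp [MForm.substAt, MForm.Realize, realize_substAt φ]
  | _, .and φ ψ, k, c, S, v => by
      simp [MForm.substAt, MForm.Realize, realize_substAt φ, realize_substAt ψ]
  | _, .all φ, k, c, S, v => by
      simp only [MForm.substAt, MForm.Realize]
      refine forall_congr' fun d => ?_
      rw [realize_substAt φ, upd_snoc]

lemma substAt_rent {m r : ℕ} (f : Fin m → Fin (r + 1)) (k : Fin (r + 1))
    (h : ∀ i, f i ≠ k) (c : M.toSet) (t : MTerm M m) :
    (rent f t).substAt k c = rent (fun i => finDrop k (f i) (h i)) t := by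
  cases t with
  | var i => simp [rent, MTerm.substAt, h i]
  | const x => rfl

lemma substAt_renf : ∀ {m r : ℕ} (φ : MForm M m) (f : Fin m → Fin (r + 1))
    (k : Fin (r + 1)) (h : ∀ i, f i ≠ k) (c : M.toSet),
    (renf f φ).substAt k c = renf (fun i => finDrop k (f i) (h i)) φ
  | _, _, .mem s t, f, k, h, c => by simp [renf, MForm.substAt, substAt_rent f k h]
  | _, _, .eq s t, f, k, h, c => by simp [renf, MForm.substAt, substAt_rent f k h]
  | _, _, .inM t, f, k, h, c => by simp [renf, MForm.substAt, substAt_rent f k h]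
  | _, _, .not φ, f, k, h, c => by simp [renf, MForm.substAt, substAt_renf φ f k h]
  | _, _, .and φ ψ, f, k, h, c => by
      simp [renf, MForm.substAt, substAt_renf φ f k h, substAt_renf ψ f k h]
  | _, _, .all φ, f, k, h, c => by
      have hfext : ∀ j, fext f j ≠ k.castSucc := by
        intro j
        refine Fin.lastCases ?_ (fun i => ?_) j
        · simp only [fext, Fin.snoc_last]
          exact last_ne_castSucc k
        · simp only [fext, Fin.snoc_castSucc]
          exact fun hh => h i (Fin.castSucc_injective _ hh)
      simp only [renf, MForm.substAt, substAt_renf φ (fext f) k.castSucc hfext c]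
      refine congrArg MForm.all (renf_congr (fun j => ?_) φ)
      refine Fin.lastCases ?_ (fun i => ?_) j
      · simp only [fext, Fin.snoc_last]
        rw [finDrop_last k]
      · simp only [fext, Fin.snoc_castSucc]
        rw [finDrop_castSucc k (f i) (h i)]

lemma substAt_renf_succ {n : ℕ} (φ : MForm M n) (c : M.toSet) :
    (renf Fin.succ φ).substAt 0 c = φ := by
  rw [substAt_renf φ Fin.succ 0 (fun i => Fin.succ_ne_zero i) c]
  refine renf_id (fun i => ?_) φ
  apply Fin.ext
  have : ¬ ((Fin.succ i).val < (0 : Fin (n + 1)).val) := by simp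
  simp [finDrop, this]

lemma substAt_rent_succ {n : ℕ} (t : MTerm M n) (c : M.toSet) :
    (rent Fin.succ t).substAt 0 c = t := by
  rw [substAt_rent Fin.succ 0 (fun i => Fin.succ_ne_zero i) c]
  refine rent_id (fun i => ?_) t
  apply Fin.ext
  have : ¬ ((Fin.succ i).val < (0 : Fin (n + 1)).val) := by simp
  simp [finDrop, this]

lemma substAt_var_zero {n : ℕ} (c : M.toSet) :
    (MTerm.var (0 : Fin (n + 1)) : MTerm M (n + 1)).substAt 0 c = .const c := by
  simp [MTerm.substAt]

lemma substAt_exNi : ∀ {n : ℕ} (θ : MForm M (n + 1)) (c : M.toSet),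
    (exNi θ).substAt 0 c = exN (θ.substAt 0 c)
  | 0, θ, c => rfl
  | n + 1, θ, c => by
      show (exNi (exF θ)).substAt 0 c = exN (exF (θ.substAt 0 c))
      rw [substAt_exNi (exF θ) c]
      congr 1
      show (MForm.not (.all (.not θ))).substAt 0 c = exF (θ.substAt 0 c)
      simp only [MForm.substAt, exF, Fin.castSucc_zero]

end MLogicAux
namespace MLogicAux

variable {M : ZFSet} {T : Set (MForm M 0)}

lemma val0 {α : Sort*} (v v' : Fin 0 → α) : v = v' := funext fun i => i.elim0

lemma fin1zero : (0 : Fin 1) = Fin.last 0 := rfl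

lemma realize_impF {n : ℕ} (φ ψ : MForm M n) (S : MStruct M) (v : Fin n → S.Dom) :
    (impF φ ψ).Realize S v ↔ (φ.Realize S v → ψ.Realize S v) := by
  simp only [impF, MForm.Realize]
  tauto

lemma realize_exF {n : ℕ} (φ : MForm M (n + 1)) (S : MStruct M) (v : Fin n → S.Dom) :
    (exF φ).Realize S v ↔ ∃ d, φ.Realize S (Fin.snoc v d) := by
  simp only [exF, MForm.Realize, not_forall, not_not]

lemma realize_exN : ∀ {n : ℕ} (ψ : MForm M n) (S : MStruct M) (v0 : Fin 0 → S.Dom),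
    (exN ψ).Realize S v0 ↔ ∃ v, ψ.Realize S v
  | 0, ψ, S, v0 => by
      constructor
      · exact fun h => ⟨v0, h⟩
      · rintro ⟨v, h⟩
        rwa [val0 v0 v]
  | n + 1, ψ, S, v0 => by
      show (exN (exF ψ)).Realize S v0 ↔ _
      rw [realize_exN (exF ψ)]
      constructor
      · rintro ⟨v, hv⟩
        rw [realize_exF] at hv
        obtain ⟨d, hd⟩ := hv
        exact ⟨Fin.snoc v d, hd⟩
      · rintro ⟨w, hw⟩
        refine ⟨Fin.init w, ?_⟩
        rw [realize_exF]
        exact ⟨w (Fin.last n), by rwa [Fin.snoc_init_self]⟩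

lemma realize_exNi : ∀ {n : ℕ} (θ : MForm M (n + 1)) (S : MStruct M) (v : Fin 1 → S.Dom),
    (exNi θ).Realize S v ↔ ∃ w : Fin n → S.Dom, θ.Realize S (Fin.cons (v 0) w)
  | 0, θ, S, v => by
      constructor
      · intro h
        refine ⟨fun i => i.elim0, ?_⟩
        have hv : (Fin.cons (v 0) (fun i => i.elim0) : Fin 1 → S.Dom) = v := by
          funext j
          have hj : j = 0 := Fin.fin_one_eq_zero j
          rw [hj]
          exact Fin.cons_zero _ _
        rwa [hv]
      · rintro ⟨w, hw⟩
        have hv : (Fin.cons (v 0) w : Fin 1 → S.Dom) = v := by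
          funext j
          have hj : j = 0 := Fin.fin_one_eq_zero j
          rw [hj]
          exact Fin.cons_zero _ _
        rwa [hv] at hw
  | n + 1, θ, S, v => by
      show (exNi (exF θ)).Realize S v ↔ _
      rw [realize_exNi (exF θ)]
      constructor
      · rintro ⟨w, hw⟩
        rw [realize_exF] at hw
        obtain ⟨d, hd⟩ := hw
        rw [← Fin.cons_snoc_eq_snoc_cons] at hd
        exact ⟨Fin.snoc w d, hd⟩
      · rintro ⟨w, hw⟩
        refine ⟨Fin.init w, ?_⟩
        rw [realize_exF]
        refine ⟨w (Fin.last n), ?_⟩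
        rw [← Fin.cons_snoc_eq_snoc_cons, Fin.snoc_init_self]
        exact hw

/-! ### Provability helpers -/

lemma prov_mp1 {φ ψ : MForm M 0} (hv : MValid M (impF φ ψ)) (h : MProv M T φ) :
    MProv M T ψ :=
  h.mp (.logic hv)

lemma prov_mp2 {φ χ ψ : MForm M 0} (hv : MValid M (impF φ (impF χ ψ)))
    (h1 : MProv M T φ) (h2 : MProv M T χ) : MProv M T ψ :=
  h2.mp (h1.mp (.logic hv))

lemma not_incon (hc : ConsistentML M T) {σ : MForm M 0}
    (h1 : MProv M T σ) (h2 : MProv M T (.not σ)) : False := by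
  refine hc ⟨σ, prov_mp2 ?_ h1 h2⟩
  intro S
  rw [realize_impF, realize_impF]
  exact fun a b => ⟨a, b⟩

/-- `ψ` is consistent with `T` over `M`-logic. -/
def Con (T : Set (MForm M 0)) {n : ℕ} (ψ : MForm M n) : Prop :=
  ¬ MProv M T (.not (exN ψ))

lemma con_of_imp {n n' : ℕ} {ψ : MForm M n} {ψ' : MForm M n'} (h : Con T ψ)
    (hsem : ∀ S : MStruct M, (∃ v, ψ.Realize S v) → ∃ v', ψ'.Realize S v') :
    Con T ψ' := by
  intro hpr
  refine h (prov_mp1 ?_ hpr)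
  intro S
  rw [realize_impF]
  simp only [MForm.Realize, realize_exN]
  exact fun h1 h2 => h1 (hsem S h2)

lemma con_renf_castLE {n r : ℕ} {ψ : MForm M n} (e0 : M.toSet) (h : Con T ψ)
    (hle : n ≤ r) : Con T (renf (Fin.castLE hle) ψ) := by
  refine con_of_imp h fun S hv => ?_
  obtain ⟨v, hv⟩ := hv
  refine ⟨fun i => if hi : i.val < n then v ⟨i.val, hi⟩ else S.const e0, ?_⟩
  rw [realize_renf]
  convert hv using 1
  funext i
  simp [Function.comp, i.isLt]

lemma con_decide {n : ℕ} {ψ : MForm M n} (h : Con T ψ) (χ : MForm M n) :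
    Con T (ψ.and χ) ∨ Con T (ψ.and (.not χ)) := by
  by_contra hcc
  push_neg at hcc
  obtain ⟨h1, h2⟩ := hcc
  rw [Con, not_not] at h1 h2
  refine h (prov_mp2 ?_ h1 h2)
  intro S
  rw [realize_impF, realize_impF]
  simp only [MForm.Realize, realize_exN]
  rintro hA hB ⟨v, hv⟩
  by_cases hχ : χ.Realize S v
  · exact hA ⟨v, hv, hχ⟩
  · exact hB ⟨v, hv, hχ⟩

lemma con_exwit {r : ℕ} {ψ' : MForm M r} {θ' : MForm M (r + 1)} (h : Con T ψ')
    (himp : ∀ (S : MStruct M) v, ψ'.Realize S v → ¬ ∀ d, θ'.Realize S (Fin.snoc v d)) :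
    Con T ((renf Fin.castSucc ψ').and (.not θ')) := by
  refine con_of_imp h fun S hv => ?_
  obtain ⟨v, hv⟩ := hv
  obtain ⟨d, hd⟩ := not_forall.mp (himp S v hv)
  refine ⟨Fin.snoc v d, ?_, hd⟩
  rw [realize_renf]
  convert hv using 1
  funext i
  simp [Function.comp]

end MLogicAux
namespace MLogicAux

variable {M : ZFSet} {T : Set (MForm M 0)}

lemma cons_comp_succ {n : ℕ} {α : Sort*} (d : α) (v : Fin n → α) :
    (Fin.cons d v : Fin (n + 1) → α) ∘ Fin.succ = v := by
  funext i
  simp [Function.comp]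

/-- The key formula for witnessing `inM`/`mem` statements: `Φ t ψ'` is the
formula with one free variable `y` expressing `¬ ∃ x⃗ (ψ'(x⃗) ∧ t(x⃗) = y)`. -/
def wform {r : ℕ} (ψ' : MForm M r) (t : MTerm M r) : MForm M (r + 1) :=
  (renf Fin.succ ψ').and (.eq (rent Fin.succ t) (.var 0))

lemma wform_substAt {r : ℕ} (ψ' : MForm M r) (t : MTerm M r) (b : M.toSet) :
    (MForm.not (exNi (wform ψ' t))).substAt 0 b =
      .not (exN (ψ'.and (.eq t (.const b)))) := by
  simp only [MForm.substAt, substAt_exNi, wform, substAt_renf_succ, substAt_rent_succ]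
  simp [MTerm.substAt]

lemma realize_wform {r : ℕ} (ψ' : MForm M r) (t : MTerm M r) (S : MStruct M)
    (d : S.Dom) (v : Fin r → S.Dom) (hψ : ψ'.Realize S v) (hd : t.val S v = d) :
    (wform ψ' t).Realize S (Fin.cons d v) := by
  refine ⟨?_, ?_⟩
  · rw [realize_renf, cons_comp_succ]
    exact hψ
  · show (rent Fin.succ t).val S (Fin.cons d v) = (Fin.cons d v : Fin (r+1) → S.Dom) 0
    rw [val_rent, cons_comp_succ, Fin.cons_zero, hd]

lemma con_inMwit {r : ℕ} {ψ' : MForm M r} {t : MTerm M r} (h : Con T ψ')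
    (himp : ∀ (S : MStruct M) v, ψ'.Realize S v → S.inM (t.val S v)) :
    ∃ b : M.toSet, Con T (ψ'.and (.eq t (.const b))) := by
  by_contra hcc
  push_neg at hcc
  simp only [Con, not_not] at hcc
  have hprov : MProv M T (vAllC (.not (exNi (wform ψ' t)))) :=
    .vRule fun b => by rw [wform_substAt]; exact hcc b
  refine h (prov_mp1 ?_ hprov)
  intro S
  rw [realize_impF]
  intro H
  simp only [MForm.Realize, realize_exN, not_exists]
  intro v hv
  have H2 := H (t.val S v)
  rw [realize_impF] at H2
  have hm : (MForm.inM (MTerm.var 0) : MForm M 1).Realize S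
      (Fin.snoc (fun i => i.elim0) (t.val S v)) := by
    show S.inM ((Fin.snoc (fun i => i.elim0) (t.val S v) : Fin 1 → S.Dom) 0)
    rw [fin1zero, Fin.snoc_last]
    exact himp S v hv
  have H3 := H2 hm
  simp only [MForm.Realize] at H3
  rw [realize_exNi] at H3
  refine H3 ⟨v, ?_⟩
  rw [fin1zero, Fin.snoc_last]
  exact realize_wform ψ' t S _ v hv rfl

lemma con_memwit {r : ℕ} {ψ' : MForm M r} {t : MTerm M r} {y : M.toSet} (h : Con T ψ')
    (himp : ∀ (S : MStruct M) v, ψ'.Realize S v → S.mem (t.val S v) (S.const y)) :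
    ∃ b : M.toSet, b.1 ∈ y.1 ∧ Con T (ψ'.and (.eq t (.const b))) := by
  by_contra hcc
  push_neg at hcc
  have hcc' : ∀ b : M.toSet, b.1 ∈ y.1 →
      MProv M T (.not (exN (ψ'.and (.eq t (.const b))))) := by
    intro b hb
    by_contra hc2
    exact hcc b hb hc2
  have hprov : MProv M T (bAllC ⟨y.1, y.2⟩ (.not (exNi (wform ψ' t)))) :=
    .setRule y.2 fun b hb => by rw [wform_substAt]; exact hcc' b hb
  refine h (prov_mp1 ?_ hprov)
  intro S
  rw [realize_impF]
  intro H
  simp only [MForm.Realize, realize_exN, not_exists]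
  intro v hv
  have H2 := H (t.val S v)
  rw [realize_impF] at H2
  have hm : (MForm.mem (MTerm.var 0) (.const ⟨y.1, y.2⟩) : MForm M 1).Realize S
      (Fin.snoc (fun i => i.elim0) (t.val S v)) := by
    show S.mem ((Fin.snoc (fun i => i.elim0) (t.val S v) : Fin 1 → S.Dom) 0) (S.const ⟨y.1, y.2⟩)
    rw [fin1zero, Fin.snoc_last]
    exact himp S v hv
  have H3 := H2 hm
  simp only [MForm.Realize] at H3
  rw [realize_exNi] at H3
  refine H3 ⟨v, ?_⟩
  rw [fin1zero, Fin.snoc_last]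
  exact realize_wform ψ' t S _ v hv rfl

end MLogicAux
namespace MLogicAux

variable {M : ZFSet}

variable (f : M.toSet → ℕ)

/-- Encoding of terms into `ℕ`. -/
def encT : ∀ {n : ℕ}, MTerm M n → ℕ
  | _, .var i => Nat.pair 0 i.val
  | _, .const x => Nat.pair 1 (f x)

/-- Encoding of formulas into `ℕ`. -/
def encF : ∀ {n : ℕ}, MForm M n → ℕ
  | _, .mem s t => Nat.pair 0 (Nat.pair (encT f s) (encT f t))
  | _, .eq s t => Nat.pair 1 (Nat.pair (encT f s) (encT f t))
  | _, .inM t => Nat.pair 2 (encT f t)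
  | _, .not φ => Nat.pair 3 (encF φ)
  | _, .and φ ψ => Nat.pair 4 (Nat.pair (encF φ) (encF ψ))
  | _, .all φ => Nat.pair 5 (encF φ)

variable {f}

lemma encT_inj (hf : Function.Injective f) {n : ℕ} (s t : MTerm M n)
    (h : encT f s = encT f t) : s = t := by
  cases s <;> cases t <;> simp [encT, Nat.pair_eq_pair] at h
  · exact congrArg MTerm.var (Fin.ext h)
  · exact congrArg MTerm.const (hf h)

lemma encF_inj (hf : Function.Injective f) :
    ∀ {n : ℕ} (φ ψ : MForm M n), encF f φ = encF f ψ → φ = ψ := by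
  intro n φ
  induction φ with
  | mem s t =>
      intro ψ h
      cases ψ <;> simp [encF, Nat.pair_eq_pair] at h
      rw [encT_inj hf _ _ h.1, encT_inj hf _ _ h.2]
  | eq s t =>
      intro ψ h
      cases ψ <;> simp [encF, Nat.pair_eq_pair] at h
      rw [encT_inj hf _ _ h.1, encT_inj hf _ _ h.2]
  | inM t =>
      intro ψ h
      cases ψ <;> simp [encF, Nat.pair_eq_pair] at h
      rw [encT_inj hf _ _ h]
  | not φ ih =>
      intro ψ h
      cases ψ <;> simp [encF, Nat.pair_eq_pair] at h
      rw [ih _ h]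
  | and φ₁ φ₂ ih1 ih2 =>
      intro ψ h
      cases ψ <;> simp [encF, Nat.pair_eq_pair] at h
      rw [ih1 _ h.1, ih2 _ h.2]
  | all φ ih =>
      intro ψ h
      cases ψ <;> simp [encF, Nat.pair_eq_pair] at h
      rw [ih _ h]

lemma exists_enum (M : ZFSet) (hcount : M.toSet.Countable) (e0 : M.toSet) :
    ∃ e : ℕ → Σ m, MForm M m, Function.Surjective e := by
  haveI := hcount.to_subtype
  obtain ⟨f, hf⟩ := exists_injective_nat M.toSet
  haveI : Countable (Σ m, MForm M m) := by
    refine ⟨⟨fun p => Nat.pair p.1 (encF f p.2), ?_⟩⟩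
    rintro ⟨m, φ⟩ ⟨m', ψ⟩ h
    simp only [Nat.pair_eq_pair] at h
    obtain ⟨h1, h2⟩ := h
    subst h1
    exact Sigma.ext rfl (heq_of_eq (encF_inj hf _ _ h2))
  haveI : Nonempty (Σ m, MForm M m) := ⟨⟨0, .inM (.const e0)⟩⟩
  exact exists_surjective_nat _

end MLogicAux
namespace MLogicAux

variable {M : ZFSet} {T : Set (MForm M 0)}

/-- `q` (a condition with context) entails `χ`. -/
def Ent (q : Σ n, MForm M n) {m : ℕ} (χ : MForm M m) : Prop :=
  ∃ h : m ≤ q.1, ∀ (S : MStruct M) (w : Fin q.1 → S.Dom),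
    q.2.Realize S w → χ.Realize S (w ∘ Fin.castLE h)

/-- The witnessing conditions performed at a step that decides `em` positively. -/
def Wit (q : Σ n, MForm M n) (em : Σ m, MForm M m) : Prop :=
  (∀ θ : MForm M (em.1 + 1), em.2 = .not (.all θ) →
     ∃ (r : ℕ) (h : em.1 ≤ r) (_ : r + 1 ≤ q.1),
       Ent q (.not (renf (fext (Fin.castLE h)) θ))) ∧
  (∀ t : MTerm M em.1, em.2 = .inM t →
     ∃ (b : M.toSet) (h : em.1 ≤ q.1), Ent q (.eq (rent (Fin.castLE h) t) (.const b))) ∧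
  (∀ (t : MTerm M em.1) (y : M.toSet), em.2 = .mem t (.const y) →
     ∃ (b : M.toSet) (h : em.1 ≤ q.1), b.1 ∈ y.1 ∧
       Ent q (.eq (rent (Fin.castLE h) t) (.const b)))

/-- One step of the construction. -/
def Step (p q : Σ n, MForm M n) (em : Σ m, MForm M m) : Prop :=
  p.1 ≤ q.1 ∧ Ent q p.2 ∧ ((Ent q em.2 ∧ Wit q em) ∨ Ent q (.not em.2))

lemma comp_val_eq {α : Sort*} {a b c : ℕ} (w : Fin c → α) (g : Fin b → Fin c)
    (h1 : a ≤ b) (h : ∀ i : Fin b, (g i).val = i.val) (hac : a ≤ c) :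
    (w ∘ g) ∘ Fin.castLE h1 = w ∘ Fin.castLE hac :=
  funext fun i => congrArg w (Fin.ext (h _))

lemma comp_castLE_rfl {α : Sort*} {r : ℕ} (w : Fin r → α) :
    w ∘ Fin.castLE (le_refl r) = w :=
  funext fun i => congrArg w (Fin.ext rfl)

section StepLemmas

variable {n m r : ℕ} {ψ : MForm M n}

lemma step_nowit (h1 : n ≤ r) (h2 : m ≤ r) {χ : MForm M m}
    (hpos : Con T ((renf (Fin.castLE h1) ψ).and (renf (Fin.castLE h2) χ)))
    (w1 : ∀ θ : MForm M (m + 1), χ ≠ .not (.all θ))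
    (w2 : ∀ t, χ ≠ .inM t)
    (w3 : ∀ t y, χ ≠ .mem t (.const y)) :
    ∃ q, Con T q.2 ∧ Step (⟨n, ψ⟩ : Σ k, MForm M k) q ⟨m, χ⟩ := by
  refine ⟨⟨r, (renf (Fin.castLE h1) ψ).and (renf (Fin.castLE h2) χ)⟩, hpos, h1, ?_,
    Or.inl ⟨?_, ?_, ?_, ?_⟩⟩
  · refine ⟨h1, fun S w hw => ?_⟩
    show MForm.Realize S ψ (w ∘ Fin.castLE h1)
    exact (realize_renf ψ _ S w).mp hw.1
  · refine ⟨h2, fun S w hw => ?_⟩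
    show MForm.Realize S χ (w ∘ Fin.castLE h2)
    exact (realize_renf χ _ S w).mp hw.2
  · exact fun θ hθ => absurd hθ (w1 θ)
  · exact fun t ht => absurd ht (w2 t)
  · exact fun t y ht => absurd ht (w3 t y)

lemma step_wit_ex (h1 : n ≤ r) (h2 : m ≤ r) {θ : MForm M (m + 1)}
    (hpos : Con T ((renf (Fin.castLE h1) ψ).and (renf (Fin.castLE h2) (.not (.all θ))))) :
    ∃ q, Con T q.2 ∧ Step (⟨n, ψ⟩ : Σ k, MForm M k) q ⟨m, .not (.all θ)⟩ := by
  set ψ₁ : MForm M r := renf (Fin.castLE h1) ψ with hψ₁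
  set θ' : MForm M (r + 1) := renf (fext (Fin.castLE h2)) θ with hθ'
  have hρ : renf (Fin.castLE h2) (MForm.not (.all θ)) = .not (.all θ') := by
    simp only [renf, hθ']
  set ψ' : MForm M r := ψ₁.and (renf (Fin.castLE h2) (.not (.all θ))) with hψ'
  have hcon2 : Con T ((renf Fin.castSucc ψ').and (.not θ')) := by
    refine con_exwit hpos fun S v hv => ?_
    have h := hv.2
    rw [hρ] at h
    exact h
  refine ⟨⟨r + 1, (renf Fin.castSucc ψ').and (.not θ')⟩, hcon2,
    (le_trans h1 (Nat.le_succ r)), ?_, Or.inl ⟨?_, ?_, ?_, ?_⟩⟩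
  · refine ⟨(le_trans h1 (Nat.le_succ r)), fun S w hw => ?_⟩
    show MForm.Realize S ψ _
    have hv := (realize_renf ψ' _ S w).mp hw.1
    have := (realize_renf ψ _ S (w ∘ Fin.castSucc)).mp hv.1
    rwa [comp_val_eq w Fin.castSucc h1 (fun i => rfl) (le_trans h1 (Nat.le_succ r))] at this
  · refine ⟨(le_trans h2 (Nat.le_succ r)), fun S w hw => ?_⟩
    show MForm.Realize S (MForm.not (.all θ)) _
    have hv := (realize_renf ψ' _ S w).mp hw.1
    have := (realize_renf (MForm.not (.all θ)) _ S (w ∘ Fin.castSucc)).mp hv.2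
    rwa [comp_val_eq w Fin.castSucc h2 (fun i => rfl) (le_trans h2 (Nat.le_succ r))] at this
  · dsimp only
    intro θ'' hθ''
    have hθ2 : (MForm.not (.all θ) : MForm M m) = .not (.all θ'') := hθ''
    have hth : θ'' = θ := by
      injection hθ2 with h h'
      injection h' with h h'
      exact h'.symm
    subst hth
    refine ⟨r, h2, le_refl _, le_refl _, fun S w hw => ?_⟩
    show MForm.Realize S (MForm.not θ') _
    have := hw.2
    rwa [comp_castLE_rfl]
  · exact fun t ht => by simp at ht
  · exact fun t y ht => by simp at ht

lemma step_wit_inM (h1 : n ≤ r) (h2 : m ≤ r) {t : MTerm M m}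
    (hpos : Con T ((renf (Fin.castLE h1) ψ).and (renf (Fin.castLE h2) (.inM t)))) :
    ∃ q, Con T q.2 ∧ Step (⟨n, ψ⟩ : Σ k, MForm M k) q ⟨m, .inM t⟩ := by
  set ψ' : MForm M r := (renf (Fin.castLE h1) ψ).and (renf (Fin.castLE h2) (.inM t)) with hψ'
  have hwit : ∃ b : M.toSet,
      Con T (ψ'.and (.eq (rent (Fin.castLE h2) t) (.const b))) := by
    refine con_inMwit hpos fun S v hv => ?_
    have h := hv.2
    rw [show (renf (Fin.castLE h2) (MForm.inM t)) = .inM (rent (Fin.castLE h2) t) from rfl] at h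
    exact h
  obtain ⟨b, hb⟩ := hwit
  refine ⟨⟨r, ψ'.and (.eq (rent (Fin.castLE h2) t) (.const b))⟩, hb, h1, ?_,
    Or.inl ⟨?_, ?_, ?_, ?_⟩⟩
  · refine ⟨h1, fun S w hw => ?_⟩
    show MForm.Realize S ψ _
    exact (realize_renf ψ _ S w).mp hw.1.1
  · refine ⟨h2, fun S w hw => ?_⟩
    show MForm.Realize S (MForm.inM t) _
    exact (realize_renf (MForm.inM t) _ S w).mp hw.1.2
  · exact fun θ hθ => by simp at hθ
  · dsimp only
    intro t'' ht
    have ht2 : (MForm.inM t : MForm M m) = .inM t'' := ht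
    have htt : t'' = t := by injection ht2 with h h'; exact h'.symm
    subst htt
    refine ⟨b, h2, le_refl _, fun S w hw => ?_⟩
    show MForm.Realize S (MForm.eq _ _) _
    have := hw.2
    rwa [comp_castLE_rfl]
  · exact fun t'' y ht => by simp at ht

lemma step_wit_mem (h1 : n ≤ r) (h2 : m ≤ r) {t : MTerm M m} {y : M.toSet}
    (hpos : Con T ((renf (Fin.castLE h1) ψ).and (renf (Fin.castLE h2) (.mem t (.const y))))) :
    ∃ q, Con T q.2 ∧ Step (⟨n, ψ⟩ : Σ k, MForm M k) q ⟨m, .mem t (.const y)⟩ := by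
  set ψ' : MForm M r := (renf (Fin.castLE h1) ψ).and
    (renf (Fin.castLE h2) (.mem t (.const y))) with hψ'
  have hwit : ∃ b : M.toSet, b.1 ∈ y.1 ∧
      Con T (ψ'.and (.eq (rent (Fin.castLE h2) t) (.const b))) := by
    refine con_memwit hpos fun S v hv => ?_
    have h := hv.2
    rw [show (renf (Fin.castLE h2) (MForm.mem t (.const y)))
        = .mem (rent (Fin.castLE h2) t) (.const y) from rfl] at h
    exact h
  obtain ⟨b, hby, hb⟩ := hwit
  refine ⟨⟨r, ψ'.and (.eq (rent (Fin.castLE h2) t) (.const b))⟩, hb, h1, ?_,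
    Or.inl ⟨?_, ?_, ?_, ?_⟩⟩
  · refine ⟨h1, fun S w hw => ?_⟩
    show MForm.Realize S ψ _
    exact (realize_renf ψ _ S w).mp hw.1.1
  · refine ⟨h2, fun S w hw => ?_⟩
    show MForm.Realize S (MForm.mem t (.const y)) _
    exact (realize_renf (MForm.mem t (.const y)) _ S w).mp hw.1.2
  · exact fun θ hθ => by simp at hθ
  · exact fun t'' ht => by simp at ht
  · dsimp only
    intro t'' y'' ht
    have ht2 : (MForm.mem t (.const y) : MForm M m) = .mem t'' (.const y'') := ht
    have htt : t'' = t ∧ y'' = y := by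
      injection ht2 with h ha hb'
      injection hb' with hb'
      exact ⟨ha.symm, hb'.symm⟩
    obtain ⟨htt1, htt2⟩ := htt
    subst htt1; subst htt2
    refine ⟨b, h2, hby, le_refl _, fun S w hw => ?_⟩
    show MForm.Realize S (MForm.eq _ _) _
    have := hw.2
    rwa [comp_castLE_rfl]

end StepLemmas

lemma step_ex (e0 : M.toSet) (em : Σ k, MForm M k) (p : Σ k, MForm M k)
    (hcon : Con T p.2) : ∃ q, Con T q.2 ∧ Step p q em := by
  obtain ⟨n, ψ⟩ := p
  obtain ⟨m, χ⟩ := em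
  have h1 : n ≤ max n m := le_max_left n m
  have h2 : m ≤ max n m := le_max_right n m
  have hcon1 : Con T (renf (Fin.castLE h1) ψ) := con_renf_castLE e0 hcon h1
  by_cases hpos : Con T ((renf (Fin.castLE h1) ψ).and (renf (Fin.castLE h2) χ))
  · -- positive branch: case on the shape of χ
    cases χ with
    | mem s t =>
        cases t with
        | const y => exact step_wit_mem h1 h2 hpos
        | var i =>
            exact step_nowit h1 h2 hpos (fun θ h => by cases h) (fun t h => by cases h)
              (fun t y h => by injection h with h1 h2 h3; cases h3)
    | eq s t =>
        exact step_nowit h1 h2 hpos (fun θ h => by cases h) (fun t h => by cases h)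
          (fun t y h => by cases h)
    | inM t => exact step_wit_inM h1 h2 hpos
    | not φin =>
        cases φin with
        | all θ => exact step_wit_ex h1 h2 hpos
        | mem s t =>
            exact step_nowit h1 h2 hpos (fun θ h => by injection h with h1 h2; cases h2)
              (fun t h => by cases h) (fun t y h => by cases h)
        | eq s t =>
            exact step_nowit h1 h2 hpos (fun θ h => by injection h with h1 h2; cases h2)
              (fun t h => by cases h) (fun t y h => by cases h)
        | inM t =>
            exact step_nowit h1 h2 hpos (fun θ h => by injection h with h1 h2; cases h2)
              (fun t h => by cases h) (fun t y h => by cases h)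
        | not φ =>
            exact step_nowit h1 h2 hpos (fun θ h => by injection h with h1 h2; cases h2)
              (fun t h => by cases h) (fun t y h => by cases h)
        | and φ φ' =>
            exact step_nowit h1 h2 hpos (fun θ h => by injection h with h1 h2; cases h2)
              (fun t h => by cases h) (fun t y h => by cases h)
    | and φ φ' =>
        exact step_nowit h1 h2 hpos (fun θ h => by cases h) (fun t h => by cases h)
          (fun t y h => by cases h)
    | all φ =>
        exact step_nowit h1 h2 hpos (fun θ h => by cases h) (fun t h => by cases h)
          (fun t y h => by cases h)
  · have hneg : Con T ((renf (Fin.castLE h1) ψ).and (.not (renf (Fin.castLE h2) χ))) :=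
      (con_decide hcon1 (renf (Fin.castLE h2) χ)).resolve_left hpos
    refine ⟨⟨max n m, (renf (Fin.castLE h1) ψ).and (.not (renf (Fin.castLE h2) χ))⟩,
      hneg, h1, ?_, Or.inr ?_⟩
    · refine ⟨h1, fun S w hw => ?_⟩
      show MForm.Realize S ψ _
      exact (realize_renf ψ _ S w).mp hw.1
    · refine ⟨h2, fun S w hw => ?_⟩
      show MForm.Realize S (MForm.not χ) _
      intro hc
      exact hw.2 ((realize_renf χ _ S w).mpr hc)

end MLogicAux
namespace MLogicAux

variable {M : ZFSet} {T : Set (MForm M 0)}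

lemma con_init (hc : ConsistentML M T) (e0 : M.toSet) :
    Con T (MForm.eq (.const e0) (.const e0) : MForm M 0) := by
  intro hpr
  have hpos : MProv M T (.eq (.const e0) (.const e0)) :=
    .atom (Or.inr (Or.inr (Or.inl ⟨e0, e0, rfl, rfl⟩)))
  exact not_incon hc hpos hpr

/-- A full Henkin chain for `T`. -/
structure ChainData (M : ZFSet) (T : Set (MForm M 0)) : Type 1 where
  s : ℕ → Σ n, MForm M n
  e : ℕ → Σ m, MForm M m
  esurj : Function.Surjective e
  con : ∀ k, Con T (s k).2
  step : ∀ k, Step (s k) (s (k + 1)) (e k)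

lemma chainData_exists (hc : ConsistentML M T) (hcount : M.toSet.Countable)
    (e0 : M.toSet) : Nonempty (ChainData M T) := by
  obtain ⟨e, he⟩ := exists_enum M hcount e0
  let F : ℕ → {p : Σ n, MForm M n // Con T p.2} := fun k =>
    Nat.rec (motive := fun _ => {p : Σ n, MForm M n // Con T p.2})
      ⟨⟨0, .eq (.const e0) (.const e0)⟩, con_init hc e0⟩
      (fun k ih => ⟨(step_ex e0 (e k) ih.1 ih.2).choose,
        (step_ex e0 (e k) ih.1 ih.2).choose_spec.1⟩) k
  exact ⟨⟨fun k => (F k).1, e, he, fun k => (F k).2,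
    fun k => (step_ex e0 (e k) (F k).1 (F k).2).choose_spec.2⟩⟩

lemma ent_refl (p : Σ n, MForm M n) : Ent p p.2 :=
  ⟨le_refl _, fun S w hw => by rwa [comp_castLE_rfl]⟩

lemma ent_trans {p q : Σ n, MForm M n} {m : ℕ} {χ : MForm M m}
    (h1 : Ent q p.2) (h2 : Ent p χ) : Ent q χ := by
  obtain ⟨ha, fa⟩ := h1
  obtain ⟨hb, fb⟩ := h2
  refine ⟨hb.trans ha, fun S w hw => ?_⟩
  have := fb S (w ∘ Fin.castLE ha) (fa S w hw)
  rwa [comp_val_eq w (Fin.castLE ha) hb (fun i => rfl) (hb.trans ha)] at this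

variable (C : ChainData M T)

lemma ent_mono : ∀ {k l : ℕ}, k ≤ l → Ent (C.s l) (C.s k).2 := by
  intro k l h
  induction l, h using Nat.le_induction with
  | base => exact ent_refl _
  | succ l hl ih => exact ent_trans (C.step l).2.1 ih

/-- The limit theory of the chain. -/
def InT {m : ℕ} (χ : MForm M m) : Prop := ∃ k, Ent (C.s k) χ

lemma arity (e0 : M.toSet) (m : ℕ) : ∃ k, m ≤ (C.s k).1 := by
  obtain ⟨k, hk⟩ := C.esurj ⟨m, .inM (.const e0)⟩
  refine ⟨k + 1, ?_⟩
  rcases (C.step k).2.2 with ⟨hE, _⟩ | hE <;>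
  · obtain ⟨h, _⟩ := hE
    rw [hk] at h
    exact h

lemma inT_up {m : ℕ} {χ : MForm M m} {k l : ℕ} (hkl : k ≤ l)
    (h : Ent (C.s k) χ) : Ent (C.s l) χ :=
  ent_trans (ent_mono C hkl) h

lemma inT_two {m₁ m₂ : ℕ} {χ₁ : MForm M m₁} {χ₂ : MForm M m₂}
    (h1 : InT C χ₁) (h2 : InT C χ₂) :
    ∃ k, Ent (C.s k) χ₁ ∧ Ent (C.s k) χ₂ := by
  obtain ⟨k₁, e1⟩ := h1
  obtain ⟨k₂, e2⟩ := h2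
  exact ⟨max k₁ k₂, inT_up C (le_max_left _ _) e1, inT_up C (le_max_right _ _) e2⟩

lemma cl0 (e0 : M.toSet) {m : ℕ} {χ : MForm M m}
    (himp : ∀ (S : MStruct M) (c : ℕ) (hc : m ≤ c) (w : Fin c → S.Dom),
      χ.Realize S (w ∘ Fin.castLE hc)) : InT C χ := by
  obtain ⟨k, hk⟩ := arity C e0 m
  exact ⟨k, hk, fun S w _ => himp S _ hk w⟩

lemma cl1 (e0 : M.toSet) {m₁ m₂ : ℕ} {χ₁ : MForm M m₁} {χ₂ : MForm M m₂}
    (h : InT C χ₁)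
    (himp : ∀ (S : MStruct M) (c : ℕ) (hc1 : m₁ ≤ c) (hc2 : m₂ ≤ c)
      (w : Fin c → S.Dom),
      χ₁.Realize S (w ∘ Fin.castLE hc1) → χ₂.Realize S (w ∘ Fin.castLE hc2)) :
    InT C χ₂ := by
  obtain ⟨k₁, e1⟩ := h
  obtain ⟨k₂, hk2⟩ := arity C e0 m₂
  set K := max k₁ k₂
  obtain ⟨h1, f1⟩ := inT_up C (le_max_left k₁ k₂) e1
  have h2 : m₂ ≤ (C.s K).1 := le_trans hk2 (ent_mono C (le_max_right k₁ k₂)).1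
  exact ⟨K, h2, fun S w hw => himp S _ h1 h2 w (f1 S w hw)⟩

lemma cl2 (e0 : M.toSet) {m₁ m₂ m₃ : ℕ} {χ₁ : MForm M m₁} {χ₂ : MForm M m₂}
    {χ₃ : MForm M m₃} (ha : InT C χ₁) (hb : InT C χ₂)
    (himp : ∀ (S : MStruct M) (c : ℕ) (hc1 : m₁ ≤ c) (hc2 : m₂ ≤ c)
      (hc3 : m₃ ≤ c) (w : Fin c → S.Dom),
      χ₁.Realize S (w ∘ Fin.castLE hc1) → χ₂.Realize S (w ∘ Fin.castLE hc2) →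
        χ₃.Realize S (w ∘ Fin.castLE hc3)) :
    InT C χ₃ := by
  obtain ⟨k, e1, e2⟩ := inT_two C ha hb
  obtain ⟨k₂, hk2⟩ := arity C e0 m₃
  set K := max k k₂
  obtain ⟨h1, f1⟩ := inT_up C (le_max_left k k₂) e1
  obtain ⟨h2, f2⟩ := inT_up C (le_max_left k k₂) e2
  have h3 : m₃ ≤ (C.s K).1 := le_trans hk2 (ent_mono C (le_max_right k k₂)).1
  exact ⟨K, h3, fun S w hw => himp S _ h1 h2 h3 w (f1 S w hw) (f2 S w hw)⟩

lemma notboth {m : ℕ} {χ : MForm M m} (h1 : InT C χ) (h2 : InT C (.not χ)) :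
    False := by
  obtain ⟨k, e1, e2⟩ := inT_two C h1 h2
  obtain ⟨ha, fa⟩ := e1
  obtain ⟨hb, fb⟩ := e2
  refine C.con k (.logic fun S => ?_)
  show ¬ (exN (C.s k).2).Realize S _
  rw [realize_exN]
  rintro ⟨w, hw⟩
  have hr1 := fa S w hw
  have hr2 := fb S w hw
  exact hr2 (by rwa [show Fin.castLE hb = Fin.castLE ha from rfl])

lemma provCon {m : ℕ} {σ : MForm M 0} {χ : MForm M m} (hσ : MProv M T σ)
    (h : InT C χ)
    (himp : ∀ (S : MStruct M) (c : ℕ) (hc : m ≤ c) (w : Fin c → S.Dom)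
      (v0 : Fin 0 → S.Dom),
      σ.Realize S v0 → χ.Realize S (w ∘ Fin.castLE hc) → False) : False := by
  obtain ⟨k, hm, fE⟩ := h
  have hv : MValid M (impF σ (.not (exN (C.s k).2))) := by
    intro S
    rw [realize_impF]
    intro hσR
    show ¬ (exN (C.s k).2).Realize S _
    rw [realize_exN]
    rintro ⟨w, hw⟩
    exact himp S _ hm w _ hσR (fE S w hw)
  exact C.con k (prov_mp1 hv hσ)

lemma decInT {m : ℕ} (χ : MForm M m) : InT C χ ∨ InT C (.not χ) := by
  obtain ⟨k, hk⟩ := C.esurj ⟨m, χ⟩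
  have h3 := (C.step k).2.2
  rw [hk] at h3
  rcases h3 with ⟨hE, _⟩ | hE
  · exact Or.inl ⟨k + 1, hE⟩
  · exact Or.inr ⟨k + 1, hE⟩

lemma inT_not_iff {m : ℕ} (χ : MForm M m) : InT C (.not χ) ↔ ¬ InT C χ :=
  ⟨fun h hc => notboth C hc h, fun h => (decInT C χ).resolve_left h⟩

lemma inT_hyp {φ : MForm M 0} (hφ : φ ∈ T) : InT C φ := by
  rcases decInT C φ with h | h
  · exact h
  · exfalso
    refine provCon C (.hyp hφ) h fun S c hc w v0 hσ hn => ?_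
    exact hn (by rwa [val0 (w ∘ Fin.castLE hc) v0])

lemma wex {m : ℕ} {θ : MForm M (m + 1)} (h : InT C (.not (.all θ))) :
    ∃ (r : ℕ) (hr : m ≤ r), InT C (.not (renf (fext (Fin.castLE hr)) θ)) := by
  obtain ⟨k, hk⟩ := C.esurj ⟨m, .not (.all θ)⟩
  have h3 := (C.step k).2.2
  rw [hk] at h3
  rcases h3 with ⟨hE, hW⟩ | hE
  · obtain ⟨r, hr, _, hEnt⟩ := hW.1 θ rfl
    exact ⟨r, hr, k + 1, hEnt⟩
  · exact absurd ⟨k + 1, hE⟩ (fun hcc => notboth C h hcc)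

lemma winM {m : ℕ} {t : MTerm M m} (h : InT C (.inM t)) :
    ∃ (b : M.toSet) (r : ℕ) (hr : m ≤ r), InT C (.eq (rent (Fin.castLE hr) t) (.const b)) := by
  obtain ⟨k, hk⟩ := C.esurj ⟨m, .inM t⟩
  have h3 := (C.step k).2.2
  rw [hk] at h3
  rcases h3 with ⟨hE, hW⟩ | hE
  · obtain ⟨b, hr, hEnt⟩ := hW.2.1 t rfl
    exact ⟨b, _, hr, k + 1, hEnt⟩
  · exact absurd ⟨k + 1, hE⟩ (fun hcc => notboth C h hcc)

lemma wmem {m : ℕ} {t : MTerm M m} {y : M.toSet} (h : InT C (.mem t (.const y))) :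
    ∃ (b : M.toSet) (r : ℕ) (hr : m ≤ r), b.1 ∈ y.1 ∧
      InT C (.eq (rent (Fin.castLE hr) t) (.const b)) := by
  obtain ⟨k, hk⟩ := C.esurj ⟨m, .mem t (.const y)⟩
  have h3 := (C.step k).2.2
  rw [hk] at h3
  rcases h3 with ⟨hE, hW⟩ | hE
  · obtain ⟨b, hr, hby, hEnt⟩ := hW.2.2 t y rfl
    exact ⟨b, _, hr, hby, k + 1, hEnt⟩
  · exact absurd ⟨k + 1, hE⟩ (fun hcc => notboth C h hcc)

end MLogicAux
namespace MLogicAux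

variable {M : ZFSet} {T : Set (MForm M 0)}

/-- Closed "Henkin" terms: constants from `M` or witnesses indexed by `ℕ`. -/
def CTerm (M : ZFSet) : Type 1 := M.toSet ⊕ ℕ

/-- Least context in which a Henkin term can be expressed. -/
def bnd : CTerm M → ℕ
  | .inl _ => 0
  | .inr j => j + 1

/-- Henkin term as an `MTerm` in a large enough context. -/
def tmc : (a : CTerm M) → (r : ℕ) → bnd a ≤ r → MTerm M r
  | .inl x, _, _ => .const x
  | .inr j, _, h => .var ⟨j, h⟩

/-- The Henkin term of an `MTerm`. -/
def ctOf : MTerm M r → CTerm M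
  | .var j => .inr j.val
  | .const x => .inl x

lemma bnd_ctOf (u : MTerm M r) : bnd (ctOf u) ≤ r := by
  cases u with
  | var j => exact j.isLt
  | const x => exact Nat.zero_le r

lemma tmc_ctOf (u : MTerm M r) : tmc (ctOf u) r (bnd_ctOf u) = u := by
  cases u with
  | var j => exact congrArg MTerm.var (Fin.ext rfl)
  | const x => rfl

lemma ctOf_tmc (a : CTerm M) (r : ℕ) (h : bnd a ≤ r) : ctOf (tmc a r h) = a := by
  cases a <;> rfl

lemma ctOf_rent {r s : ℕ} (f : Fin r → Fin s) (hval : ∀ j, (f j).val = j.val)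
    (u : MTerm M r) : ctOf (rent f u) = ctOf u := by
  cases u with
  | var j => exact congrArg Sum.inr (hval j)
  | const x => rfl

lemma rent_tmc {r s : ℕ} (h' : r ≤ s) (a : CTerm M) (h : bnd a ≤ r) :
    rent (Fin.castLE h') (tmc a r h) = tmc a s (h.trans h') := by
  cases a with
  | inl x => rfl
  | inr j => exact congrArg MTerm.var (Fin.ext rfl)

/-- Value of a Henkin term under a valuation. -/
def cval {S : MStruct M} {c : ℕ} (w : Fin c → S.Dom) : (a : CTerm M) → bnd a ≤ c → S.Dom
  | .inl x, _ => S.const x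
  | .inr j, h => w ⟨j, h⟩

lemma val_tmc {S : MStruct M} {c : ℕ} (w : Fin c → S.Dom) (a : CTerm M)
    (h : bnd a ≤ c) : (tmc a c h).val S w = cval w a h := by
  cases a <;> rfl

lemma cval_comp {S : MStruct M} {r c : ℕ} (w : Fin c → S.Dom) (hc : r ≤ c)
    (a : CTerm M) (h : bnd a ≤ r) :
    cval (w ∘ Fin.castLE hc) a h = cval w a (h.trans hc) := by
  cases a with
  | inl x => rfl
  | inr j => exact congrArg w (Fin.ext rfl)

lemma cval_irrel {S : MStruct M} {c : ℕ} (w : Fin c → S.Dom) (a : CTerm M)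
    (h h' : bnd a ≤ c) : cval w a h = cval w a h' := rfl

variable (C : ChainData M T)

/-- Equality in the limit theory. -/
def aeq (a b : CTerm M) : Prop :=
  InT C (.eq (tmc a (max (bnd a) (bnd b)) (le_max_left _ _))
             (tmc b (max (bnd a) (bnd b)) (le_max_right _ _)))

/-- Membership in the limit theory. -/
def amem (a b : CTerm M) : Prop :=
  InT C (.mem (tmc a (max (bnd a) (bnd b)) (le_max_left _ _))
              (tmc b (max (bnd a) (bnd b)) (le_max_right _ _)))

/-- `inM` in the limit theory. -/
def ainM (a : CTerm M) : Prop := InT C (.inM (tmc a (bnd a) (le_refl _)))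

lemma inT_eq_iff (e0 : M.toSet) {a b : CTerm M} {r : ℕ} (ha : bnd a ≤ r) (hb : bnd b ≤ r) :
    InT C (.eq (tmc a r ha) (tmc b r hb)) ↔ aeq C a b := by
  constructor <;> intro h <;>
  · refine cl1 C e0 h fun S c hc1 hc2 w hr => ?_
    show (tmc a _ _).val S _ = (tmc b _ _).val S _
    have hr' : (tmc a _ _).val S (w ∘ Fin.castLE hc1)
        = (tmc b _ _).val S (w ∘ Fin.castLE hc1) := hr
    simp only [val_tmc, cval_comp] at hr' ⊢
    exact hr'

lemma inT_mem_iff (e0 : M.toSet) {a b : CTerm M} {r : ℕ} (ha : bnd a ≤ r) (hb : bnd b ≤ r) :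
    InT C (.mem (tmc a r ha) (tmc b r hb)) ↔ amem C a b := by
  constructor <;> intro h <;>
  · refine cl1 C e0 h fun S c hc1 hc2 w hr => ?_
    show S.mem ((tmc a _ _).val S _) ((tmc b _ _).val S _)
    have hr' : S.mem ((tmc a _ _).val S (w ∘ Fin.castLE hc1))
        ((tmc b _ _).val S (w ∘ Fin.castLE hc1)) := hr
    simp only [val_tmc, cval_comp] at hr' ⊢
    exact hr'

lemma inT_inM_iff (e0 : M.toSet) {a : CTerm M} {r : ℕ} (ha : bnd a ≤ r) :
    InT C (.inM (tmc a r ha)) ↔ ainM C a := by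
  constructor <;> intro h <;>
  · refine cl1 C e0 h fun S c hc1 hc2 w hr => ?_
    show S.inM ((tmc a _ _).val S _)
    have hr' : S.inM ((tmc a _ _).val S (w ∘ Fin.castLE hc1)) := hr
    simp only [val_tmc, cval_comp] at hr' ⊢
    exact hr'

lemma aeq_refl (e0 : M.toSet) (a : CTerm M) : aeq C a a := by
  refine cl0 C e0 fun S c hc w => ?_
  show (tmc a _ _).val S _ = (tmc a _ _).val S _
  simp only [val_tmc, cval_comp]

lemma aeq_symm (e0 : M.toSet) {a b : CTerm M} (h : aeq C a b) : aeq C b a := by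
  refine cl1 C e0 h fun S c hc1 hc2 w hr => ?_
  show (tmc b _ _).val S _ = (tmc a _ _).val S _
  have hr' : (tmc a _ _).val S (w ∘ Fin.castLE hc1)
      = (tmc b _ _).val S (w ∘ Fin.castLE hc1) := hr
  simp only [val_tmc, cval_comp] at hr' ⊢
  exact hr'.symm

lemma aeq_trans (e0 : M.toSet) {a b c' : CTerm M} (h1 : aeq C a b) (h2 : aeq C b c') :
    aeq C a c' := by
  refine cl2 C e0 h1 h2 fun S c hc1 hc2 hc3 w hr1 hr2 => ?_
  show (tmc a _ _).val S _ = (tmc c' _ _).val S _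
  have hr1' : (tmc a _ _).val S (w ∘ Fin.castLE hc1)
      = (tmc b _ _).val S (w ∘ Fin.castLE hc1) := hr1
  have hr2' : (tmc b _ _).val S (w ∘ Fin.castLE hc2)
      = (tmc c' _ _).val S (w ∘ Fin.castLE hc2) := hr2
  simp only [val_tmc, cval_comp] at hr1' hr2' ⊢
  exact hr1'.trans hr2'

/-- The setoid of Henkin terms. -/
def csetoid (e0 : M.toSet) : Setoid (CTerm M) :=
  ⟨aeq C, fun a => aeq_refl C e0 a, fun h => aeq_symm C e0 h,
    fun h1 h2 => aeq_trans C e0 h1 h2⟩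

lemma amem_congr (e0 : M.toSet) {a b a' b' : CTerm M} (h : amem C a b) (ha : aeq C a a')
    (hb : aeq C b b') : amem C a' b' := by
  have step1 : amem C a' b := by
    refine cl2 C e0 h ha fun S c hc1 hc2 hc3 w hr1 hr2 => ?_
    show S.mem ((tmc a' _ _).val S _) ((tmc b _ _).val S _)
    have hr1' : S.mem ((tmc a _ _).val S (w ∘ Fin.castLE hc1))
        ((tmc b _ _).val S (w ∘ Fin.castLE hc1)) := hr1
    have hr2' : (tmc a _ _).val S (w ∘ Fin.castLE hc2)
        = (tmc a' _ _).val S (w ∘ Fin.castLE hc2) := hr2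
    simp only [val_tmc, cval_comp] at hr1' hr2' ⊢
    rw [← hr2']
    exact hr1'
  refine cl2 C e0 step1 hb fun S c hc1 hc2 hc3 w hr1 hr2 => ?_
  show S.mem ((tmc a' _ _).val S _) ((tmc b' _ _).val S _)
  have hr1' : S.mem ((tmc a' _ _).val S (w ∘ Fin.castLE hc1))
      ((tmc b _ _).val S (w ∘ Fin.castLE hc1)) := hr1
  have hr2' : (tmc b _ _).val S (w ∘ Fin.castLE hc2)
      = (tmc b' _ _).val S (w ∘ Fin.castLE hc2) := hr2
  simp only [val_tmc, cval_comp] at hr1' hr2' ⊢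
  rw [← hr2']
  exact hr1'

lemma ainM_congr (e0 : M.toSet) {a a' : CTerm M} (h : ainM C a) (ha : aeq C a a') :
    ainM C a' := by
  refine cl2 C e0 h ha fun S c hc1 hc2 hc3 w hr1 hr2 => ?_
  show S.inM ((tmc a' _ _).val S _)
  have hr1' : S.inM ((tmc a _ _).val S (w ∘ Fin.castLE hc1)) := hr1
  have hr2' : (tmc a _ _).val S (w ∘ Fin.castLE hc2)
      = (tmc a' _ _).val S (w ∘ Fin.castLE hc2) := hr2
  simp only [val_tmc, cval_comp] at hr1' hr2' ⊢
  rw [← hr2']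
  exact hr1'

/-- The term model. -/
def Smod (e0 : M.toSet) : MStruct M where
  Dom := Quotient (csetoid C e0)
  mem := Quotient.lift₂ (amem C) fun a b a' b' ha hb =>
    propext ⟨fun h => amem_congr C e0 h ha hb,
      fun h => amem_congr C e0 h (aeq_symm C e0 ha) (aeq_symm C e0 hb)⟩
  inM := Quotient.lift (ainM C) fun a a' ha =>
    propext ⟨fun h => ainM_congr C e0 h ha,
      fun h => ainM_congr C e0 h (aeq_symm C e0 ha)⟩
  const := fun x => Quotient.mk _ (Sum.inl x)

end MLogicAux
namespace MLogicAux

variable {M : ZFSet} {T : Set (MForm M 0)}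

lemma subt_id {m : ℕ} {σ : Fin m → MTerm M m} (h : ∀ i, σ i = .var i)
    (t : MTerm M m) : subt σ t = t := by cases t <;> simp [subt, h]

lemma sext_id {m : ℕ} {σ : Fin m → MTerm M m} (h : ∀ i, σ i = .var i) :
    ∀ j, sext σ j = .var j := by
  intro j
  refine Fin.lastCases ?_ (fun i => ?_) j
  · simp [sext]
  · simp [sext, h, rent]

lemma subf_id : ∀ {m : ℕ} {σ : Fin m → MTerm M m}, (∀ i, σ i = .var i) →
    ∀ (φ : MForm M m), subf σ φ = φ
  | _, _, h, .mem s t => by simp [subf, subt_id h]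
  | _, _, h, .eq s t => by simp [subf, subt_id h]
  | _, _, h, .inM t => by simp [subf, subt_id h]
  | _, _, h, .not φ => by simp [subf, subf_id h φ]
  | _, _, h, .and φ ψ => by simp [subf, subf_id h φ, subf_id h ψ]
  | _, _, h, .all φ => by simp [subf, subf_id (sext_id h) φ]

lemma snoc_comp_castSucc {n : ℕ} {α : Sort*} (v : Fin n → α) (d : α) :
    (Fin.snoc v d : Fin (n + 1) → α) ∘ Fin.castSucc = v := by
  funext i
  simp [Function.comp]

variable (C : ChainData M T)

lemma inT_and_iff (e0 : M.toSet) {m : ℕ} (χ₁ χ₂ : MForm M m) :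
    InT C (χ₁.and χ₂) ↔ InT C χ₁ ∧ InT C χ₂ := by
  constructor
  · intro h
    constructor
    · exact cl1 C e0 h fun S c hc1 hc2 w hr => hr.1
    · exact cl1 C e0 h fun S c hc1 hc2 w hr => hr.2
  · rintro ⟨h1, h2⟩
    exact cl2 C e0 h1 h2 fun S c hc1 hc2 hc3 w hr1 hr2 => ⟨hr1, hr2⟩

variable (e0 : M.toSet)

/-- The interpretation of a term in the term model. -/
def qt {r : ℕ} (u : MTerm M r) : (Smod C e0).Dom :=
  Quotient.mk (csetoid C e0) (ctOf u)

lemma val_qt {m r : ℕ} (s : MTerm M m) (σ : Fin m → MTerm M r) :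
    s.val (Smod C e0) (fun i => qt C e0 (σ i)) = qt C e0 (subt σ s) := by
  cases s <;> rfl

lemma smod_mem_iff {r : ℕ} (u w : MTerm M r) :
    (Smod C e0).mem (qt C e0 u) (qt C e0 w) ↔ InT C (.mem u w) := by
  show amem C (ctOf u) (ctOf w) ↔ _
  rw [← inT_mem_iff C e0 (bnd_ctOf u) (bnd_ctOf w), tmc_ctOf, tmc_ctOf]

lemma smod_eq_iff {r : ℕ} (u w : MTerm M r) :
    (qt C e0 u = qt C e0 w) ↔ InT C (.eq u w) := by
  rw [show (qt C e0 u = qt C e0 w) ↔ aeq C (ctOf u) (ctOf w) from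
    ⟨fun h => Quotient.exact h, fun h => Quotient.sound h⟩]
  rw [← inT_eq_iff C e0 (bnd_ctOf u) (bnd_ctOf w), tmc_ctOf, tmc_ctOf]

lemma smod_inM_iff {r : ℕ} (u : MTerm M r) :
    (Smod C e0).inM (qt C e0 u) ↔ InT C (.inM u) := by
  show ainM C (ctOf u) ↔ _
  rw [← inT_inM_iff C e0 (bnd_ctOf u), tmc_ctOf]

/-- **Truth lemma** for the term model. -/
lemma truth : ∀ {m : ℕ} (χ : MForm M m) {r : ℕ} (σ : Fin m → MTerm M r),
    χ.Realize (Smod C e0) (fun i => qt C e0 (σ i)) ↔ InT C (subf σ χ)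
  | _, .mem s t, r, σ => by
      simp only [subf]
      have h1 : (MForm.mem s t).Realize (Smod C e0) (fun i => qt C e0 (σ i)) ↔
          (Smod C e0).mem (qt C e0 (subt σ s)) (qt C e0 (subt σ t)) := by
        rw [← val_qt C e0 s σ, ← val_qt C e0 t σ]
        exact Iff.rfl
      rw [h1, smod_mem_iff]
  | _, .eq s t, r, σ => by
      simp only [subf]
      have h1 : (MForm.eq s t).Realize (Smod C e0) (fun i => qt C e0 (σ i)) ↔
          (qt C e0 (subt σ s) = qt C e0 (subt σ t)) := by
        rw [← val_qt C e0 s σ, ← val_qt C e0 t σ]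
        exact Iff.rfl
      rw [h1, smod_eq_iff]
  | _, .inM t, r, σ => by
      simp only [subf]
      have h1 : (MForm.inM t).Realize (Smod C e0) (fun i => qt C e0 (σ i)) ↔
          (Smod C e0).inM (qt C e0 (subt σ t)) := by
        rw [← val_qt C e0 t σ]
        exact Iff.rfl
      rw [h1, smod_inM_iff]
  | _, .not φ, r, σ => by
      simp only [subf]
      rw [inT_not_iff C]
      exact not_congr (truth φ σ)
  | _, .and φ ψ, r, σ => by
      simp only [subf]
      rw [inT_and_iff C e0]
      exact and_congr (truth φ σ) (truth ψ σ)
  | m, .all θ, r, σ => by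
      simp only [subf]
      constructor
      · intro H
        by_contra hni
        have hneg : InT C (.not (.all (subf (sext σ) θ))) :=
          (decInT C _).resolve_left hni
        obtain ⟨r₂, hr, hw⟩ := wex C hneg
        rw [renf_subf] at hw
        set G := fext (Fin.castLE hr) with hG
        set τ₂ : Fin (m + 1) → MTerm M (r₂ + 1) := fun i => rent G (sext σ i) with hτ₂
        have hnot : ¬ InT C (subf τ₂ θ) := (inT_not_iff C _).mp hw
        have hvaleq : (fun i => qt C e0 (τ₂ i)) =
            Fin.snoc (fun i => qt C e0 (σ i))
              (Quotient.mk (csetoid C e0) (Sum.inr r₂)) := by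
          funext j
          refine Fin.lastCases ?_ (fun i => ?_) j
          · refine Eq.trans ?_ (Fin.snoc_last (α := fun _ => (Smod C e0).Dom) (p := fun i => qt C e0 (σ i)) (x := Quotient.mk (csetoid C e0) (Sum.inr r₂))).symm
            show Quotient.mk _ (ctOf (rent G (sext σ (Fin.last m)))) = _
            rw [show sext σ (Fin.last m) = MTerm.var (Fin.last r) from Fin.snoc_last _ _]
            show Quotient.mk _ (Sum.inr (G (Fin.last r)).val) = _
            rw [show G (Fin.last r) = Fin.last r₂ from Fin.snoc_last _ _]
            rfl
          · refine Eq.trans ?_ (Fin.snoc_castSucc (α := fun _ => (Smod C e0).Dom) (p := fun i => qt C e0 (σ i)) (x := Quotient.mk (csetoid C e0) (Sum.inr r₂)) (i := i)).symm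
            show Quotient.mk _ (ctOf (rent G (sext σ i.castSucc))) = _
            rw [show sext σ i.castSucc = rent Fin.castSucc (σ i) from Fin.snoc_castSucc _ _ _]
            rw [rent_rent]
            have hval : ∀ j : Fin r, (G j.castSucc).val = j.val := fun j => by
              rw [show G j.castSucc = (Fin.castLE hr j).castSucc from Fin.snoc_castSucc _ _ _]
              rfl
            rw [ctOf_rent _ hval (σ i)]
            rfl
        exact hnot ((truth θ τ₂).mp (by rw [hvaleq]; exact H _))
      · intro H d
        refine Quotient.inductionOn d fun cc => ?_
        have hr1 : r ≤ max r (bnd cc) := le_max_left _ _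
        have hr2 : bnd cc ≤ max r (bnd cc) := le_max_right _ _
        set τ : Fin (m + 1) → MTerm M (max r (bnd cc)) :=
          Fin.snoc (fun i => rent (Fin.castLE hr1) (σ i)) (tmc cc _ hr2) with hτ
        have hvaleq : (fun i => qt C e0 (τ i)) =
            Fin.snoc (fun i => qt C e0 (σ i)) (Quotient.mk (csetoid C e0) cc) := by
          funext j
          refine Fin.lastCases ?_ (fun i => ?_) j
          · refine Eq.trans ?_ (Fin.snoc_last (α := fun _ => (Smod C e0).Dom) (p := fun i => qt C e0 (σ i)) (x := Quotient.mk (csetoid C e0) cc)).symm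
            show Quotient.mk _ (ctOf (τ (Fin.last m))) = _
            rw [show τ (Fin.last m) = tmc cc _ hr2 from Fin.snoc_last _ _, ctOf_tmc]
          · refine Eq.trans ?_ (Fin.snoc_castSucc (α := fun _ => (Smod C e0).Dom) (p := fun i => qt C e0 (σ i)) (x := Quotient.mk (csetoid C e0) cc) (i := i)).symm
            show Quotient.mk _ (ctOf (τ i.castSucc)) = _
            rw [show τ i.castSucc = rent (Fin.castLE hr1) (σ i) from Fin.snoc_castSucc _ _ _]
            rw [ctOf_rent (Fin.castLE hr1) (fun j => rfl) (σ i)]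
            rfl
        have hInT : InT C (subf τ θ) := by
          refine cl1 C e0 H fun S c hc1 hc2 w hAll => ?_
          have hall' : ∀ d', (subf (sext σ) θ).Realize S
              (Fin.snoc (w ∘ Fin.castLE hc1) d') := hAll
          set d' := cval w cc (hr2.trans hc2) with hd'
          have hinst := hall' d'
          rw [realize_subf] at hinst
          rw [realize_subf]
          have hvv : (fun i => (sext σ i).val S (Fin.snoc (w ∘ Fin.castLE hc1) d')) =
              (fun i => (τ i).val S (w ∘ Fin.castLE hc2)) := by
            funext j
            refine Fin.lastCases ?_ (fun i => ?_) j
            · rw [show sext σ (Fin.last m) = MTerm.var (Fin.last r) from Fin.snoc_last _ _]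
              rw [show τ (Fin.last m) = tmc cc _ hr2 from Fin.snoc_last _ _]
              rw [val_tmc, cval_comp]
              show (Fin.snoc (w ∘ Fin.castLE hc1) d' : Fin (r+1) → S.Dom) (Fin.last r) = _
              rw [Fin.snoc_last]
            · rw [show sext σ i.castSucc = rent Fin.castSucc (σ i) from Fin.snoc_castSucc _ _ _]
              rw [show τ i.castSucc = rent (Fin.castLE hr1) (σ i) from Fin.snoc_castSucc _ _ _]
              rw [val_rent, val_rent, snoc_comp_castSucc]
              rw [comp_val_eq w (Fin.castLE hc2) hr1 (fun i => rfl) hc1]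
          rw [← hvv]
          exact hinst
        have := (truth θ τ).mpr hInT
        rwa [hvaleq] at this

end MLogicAux
namespace MLogicAux

variable {M : ZFSet} {T : Set (MForm M 0)}

lemma completeness (hc : ConsistentML M T) (hcount : M.toSet.Countable)
    (e0 : M.toSet) :
    ∃ S : MStruct M, StandardOverM M S ∧ ∀ φ ∈ T, φ.Realize S (fun i => i.elim0) := by
  obtain ⟨C⟩ := chainData_exists hc hcount e0
  refine ⟨Smod C e0, ⟨?_, ?_, ?_, ?_⟩, ?_⟩
  · -- injectivity of constants
    intro x y h
    by_contra hxy
    have h' : qt C e0 (.const x : MTerm M 0) = qt C e0 (.const y : MTerm M 0) := h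
    have hin : InT C (.eq (.const x : MTerm M 0) (.const y)) :=
      (smod_eq_iff C e0 (.const x) (.const y)).mp h'
    exact provCon C (.atom (Or.inr (Or.inr (Or.inr ⟨x, y, hxy, rfl⟩)))) hin
      (fun S c hc' w v0 hσ hr => hσ hr)
  · -- membership of constants
    intro x y
    constructor
    · intro hm
      by_contra hxy
      have hin : InT C (.mem (.const x : MTerm M 0) (.const y)) :=
        (smod_mem_iff C e0 (.const x) (.const y)).mp hm
      exact provCon C (.atom (Or.inr (Or.inl ⟨x, y, hxy, rfl⟩))) hin
        (fun S c hc' w v0 hσ hr => hσ hr)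
    · intro hxy
      rcases decInT C (.mem (.const x : MTerm M 0) (.const y)) with h | h
      · exact (smod_mem_iff C e0 (.const x) (.const y)).mpr h
      · exact absurd (provCon C (.atom (Or.inl ⟨x, y, hxy, rfl⟩)) h
          (fun S c hc' w v0 hσ hr => hr hσ)) id
  · -- inM is the image of the constants
    intro d
    refine Quotient.inductionOn d fun a => ?_
    constructor
    · intro hin
      have hin' : InT C (.inM (tmc a (bnd a) (le_refl _))) := hin
      obtain ⟨b, r, hr, hEq⟩ := winM C hin'
      rw [rent_tmc] at hEq
      have haeq : aeq C a (Sum.inl b) :=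
        (inT_eq_iff C e0 (a := a) (b := Sum.inl b)
          (le_trans (le_refl _) hr) (Nat.zero_le r)).mp hEq
      exact ⟨b, Quotient.sound haeq⟩
    · rintro ⟨x, hd⟩
      rw [hd]
      show ainM C (Sum.inl x)
      rcases decInT C (.inM (.const x : MTerm M 0)) with h | h
      · exact h
      · exact absurd (provCon C (.constInM x) h
          (fun S c hc' w v0 hσ hr => hr hσ)) id
  · -- everything below a constant is a constant
    intro d y
    refine Quotient.inductionOn d fun a => ?_
    intro hm
    have hm' : InT C (.mem (tmc a (max (bnd a) (bnd (Sum.inl y : CTerm M)))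
        (le_max_left _ _)) (.const y)) := hm
    obtain ⟨b, r, hr, _, hEq⟩ := wmem C hm'
    rw [rent_tmc] at hEq
    have haeq : aeq C a (Sum.inl b) :=
      (inT_eq_iff C e0 (a := a) (b := Sum.inl b)
        (le_trans (le_max_left _ _) hr) (Nat.zero_le r)).mp hEq
    exact ⟨b, Quotient.sound haeq⟩
  · -- T is satisfied
    intro φ hφ
    have h := inT_hyp C hφ
    set σ : Fin 0 → MTerm M 0 := fun i => i.elim0 with hσ
    have hid : ∀ i : Fin 0, σ i = .var i := fun i => i.elim0
    have h2 := (truth C e0 φ σ).mpr (by rw [subf_id hid φ]; exact h)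
    rwa [show (fun i => qt C e0 (σ i)) = (fun i : Fin 0 => i.elim0) from
      val0 _ _] at h2

lemma upd_zero_empty {α : Sort*} (x : α) (v : Fin 0 → α) :
    upd 0 x v = Fin.snoc v x := by
  funext j
  have hj : j = 0 := Fin.fin_one_eq_zero j
  subst hj
  rw [show (Fin.snoc v x : Fin 1 → α) 0 = x from by rw [fin1zero, Fin.snoc_last]]
  exact dif_pos rfl

lemma sound {S : MStruct M} (hstd : StandardOverM M S)
    (hsat : ∀ φ ∈ T, φ.Realize S (fun i => i.elim0)) :
    ∀ {φ : MForm M 0}, MProv M T φ → φ.Realize S (fun i => i.elim0) := by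
  intro φ h
  induction h with
  | hyp h => exact hsat _ h
  | constInM x => exact (hstd.2.2.1 _).mpr ⟨x, rfl⟩
  | atom h =>
      rcases h with ⟨x, y, hxy, rfl⟩ | ⟨x, y, hxy, rfl⟩ | ⟨x, y, hxy, rfl⟩ |
        ⟨x, y, hxy, rfl⟩
      · exact (hstd.2.1 x y).mpr hxy
      · exact fun hc => hxy ((hstd.2.1 x y).mp hc)
      · exact congrArg S.const hxy
      · exact fun hc => hxy (hstd.1 hc)
  | logic h => exact h S
  | mp h1 h2 ih1 ih2 => exact ((realize_impF _ _ _ _).mp ih2) ih1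
  | @setRule a ha φ h ih =>
      intro d
      rw [realize_impF]
      intro hmem
      have hd : S.mem d (S.const ⟨a, ha⟩) := by
        have hz : (Fin.snoc (fun i : Fin 0 => i.elim0) d : Fin 1 → S.Dom) 0 = d := by
          rw [fin1zero, Fin.snoc_last]
        have hd0 : S.mem ((Fin.snoc (fun i : Fin 0 => i.elim0) d : Fin 1 → S.Dom) 0)
            (S.const ⟨a, ha⟩) := hmem
        rwa [hz] at hd0
      obtain ⟨b, hb⟩ := hstd.2.2.2 d ⟨a, ha⟩ hd
      have hba : b.1 ∈ a := by
        rw [hb] at hd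
        exact (hstd.2.1 b ⟨a, ha⟩).mp hd
      have h3 := (realize_substAt φ 0 b S (fun i => i.elim0)).mp (ih b hba)
      rw [upd_zero_empty] at h3
      rwa [hb]
  | @vRule φ h ih =>
      intro d
      rw [realize_impF]
      intro hmem
      have hd : S.inM d := by
        have hz : (Fin.snoc (fun i : Fin 0 => i.elim0) d : Fin 1 → S.Dom) 0 = d := by
          rw [fin1zero, Fin.snoc_last]
        have hd0 : S.inM ((Fin.snoc (fun i : Fin 0 => i.elim0) d : Fin 1 → S.Dom) 0) := hmem
        rwa [hz] at hd0
      obtain ⟨b, hb⟩ := (hstd.2.2.1 d).mp hd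
      have h3 := (realize_substAt φ 0 b S (fun i => i.elim0)).mp (ih b)
      rw [upd_zero_empty] at h3
      rwa [hb]

end MLogicAux

/-- **Barwise completeness for `M`-logic.** If `M` is a
countable transitive model of ZFC, then a theory `T` in the `M`-logic language
is consistent in `M`-logic if and only if `T` has a model which is an outer
model of `M`: a structure containing `M` with the constants interpreted
standardly and `M̄` interpreted as `M`. -/
theorem mlogic_consistent_iff_outer_model (M : ZFSet) (hM : IsZFCModel M)
    (hcount : M.toSet.Countable) (T : Set (MForm M 0)) :
    ConsistentML M T ↔
      ∃ S : MStruct M, StandardOverM M S ∧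
        ∀ φ ∈ T, φ.Realize S (fun i => i.elim0) := by
  constructor
  · intro hc
    exact MLogicAux.completeness hc hcount ⟨∅, hM.empty_mem⟩
  · rintro ⟨S, hstd, hsat⟩ ⟨φ, hpr⟩
    have h := MLogicAux.sound hstd hsat hpr
    exact h.2 h.1
end
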